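/- arXiv:2511.06504 — 2 statements merged into one kernel-verified Lean document; each statement's English description precedes it below -/
import Mathlib

section
/- Monotonicity with backup: Let σ be a permutation on V \ {u*} under which Ranking matches u to v and u has backup b with σ(b) > σ(v) + 1. Then in σ⁺ = σ_v^{σ(v)+1} (v swapped with its successor), Ranking still matches u to v and u's backup is still b. Consequently, for every i with σ(v) ≤ i < σ(b), Ranking on σ_v^i matches u to v with backup b at the same rank σ(b). -/
open List

variable {V : Type*}

/-- Whether vertex `u` is an endpoint of some edge in the partial matching `M`. -/
def isMatchedL [DecidableEq V] (M : List (V × V)) (u : V) : Bool :=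
  M.any (fun p => p.1 = u || p.2 = u)

/-- One step of the Ranking algorithm: process vertex `u`.  If `u` is not forbidden and
not yet matched, it is matched to the first available neighbor in the order `order`. -/
def rankingStepF [DecidableEq V] (G : SimpleGraph V) [DecidableRel G.Adj]
    (forbidden : List V) (order : List V) (M : List (V × V)) (u : V) : List (V × V) :=
  if u ∈ forbidden ∨ isMatchedL M u = true then M
  else
    match order.find? (fun w =>
        decide (G.Adj u w) && !(decide (w ∈ forbidden)) && !isMatchedL M w) with
    | some w => (u, w) :: M
    | none => M

/-- Partial matching of Ranking after processing the first `t` vertices of `order`. -/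
def rankingPartialF [DecidableEq V] (G : SimpleGraph V) [DecidableRel G.Adj]
    (forbidden order : List V) (t : ℕ) : List (V × V) :=
  (order.take t).foldl (rankingStepF G forbidden order) []

/-- The matching output by Ranking on the permutation given by the list `order`. -/
def rankingList [DecidableEq V] (G : SimpleGraph V) [DecidableRel G.Adj]
    (order : List V) : List (V × V) :=
  order.foldl (rankingStepF G [] order) []

/-- `u` is matched to `v` in the output of Ranking on `order`. -/
def matchedTo [DecidableEq V] (G : SimpleGraph V) [DecidableRel G.Adj]
    (order : List V) (u v : V) : Prop :=
  (u, v) ∈ rankingList G order ∨ (v, u) ∈ rankingList G order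

/-- `u` is matched in the output of Ranking on `order`. -/
def isMatchedInRanking [DecidableEq V] (G : SimpleGraph V) [DecidableRel G.Adj]
    (order : List V) (u : V) : Prop :=
  ∃ v, matchedTo G order u v

/-- The set of (unordered) edges of a list of matched pairs. -/
def matchEdges (L : List (V × V)) : Set (Sym2 V) := {e | ∃ p ∈ L, e = s(p.1, p.2)}

section Infra

variable [DecidableEq V] (G : SimpleGraph V) [DecidableRel G.Adj]

/-- The availability predicate used by a Ranking step with no forbidden vertices. -/
def qP (M : List (V × V)) (x y : V) : Bool := decide (G.Adj x y) && !isMatchedL M y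

/-- Run a segment `l` of steps with ambient order `ord` from state `M`. -/
def runR (ord l : List V) (M : List (V × V)) : List (V × V) :=
  l.foldl (rankingStepF G [] ord) M

lemma runR_nil (ord : List V) (M : List (V × V)) : runR G ord [] M = M := rfl

lemma runR_cons (ord : List V) (a : V) (l : List V) (M : List (V × V)) :
    runR G ord (a :: l) M = runR G ord l (rankingStepF G [] ord M a) := rfl

lemma runR_append (ord l₁ l₂ : List V) (M : List (V × V)) :
    runR G ord (l₁ ++ l₂) M = runR G ord l₂ (runR G ord l₁ M) :=
  List.foldl_append

lemma rankingList_eq_runR (ord : List V) : rankingList G ord = runR G ord ord [] := rfl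

lemma isMatchedL_iff (M : List (V × V)) (z : V) :
    isMatchedL M z = true ↔ ∃ p ∈ M, p.1 = z ∨ p.2 = z := by
  simp [isMatchedL, List.any_eq_true]

lemma isMatchedL_mono {M M' : List (V × V)} (h : ∀ p ∈ M, p ∈ M') {z : V}
    (hz : isMatchedL M z = true) : isMatchedL M' z = true := by
  rw [isMatchedL_iff] at hz ⊢
  obtain ⟨p, hp, h2⟩ := hz
  exact ⟨p, h p hp, h2⟩

lemma step_eq (ord : List V) (M : List (V × V)) (x : V) :
    rankingStepF G [] ord M x =
      if isMatchedL M x = true then M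
      else
        match ord.find? (qP G M x) with
        | some w => (x, w) :: M
        | none => M := by
  unfold rankingStepF
  have hp : (fun w => decide (G.Adj x w) && !(decide (w ∈ ([] : List V))) && !isMatchedL M w)
      = qP G M x := by
    funext y; simp [qP]
  rw [hp]
  simp

/-- Case analysis for one step. -/
lemma step_cases (ord : List V) (M : List (V × V)) (x : V) :
    rankingStepF G [] ord M x = M ∨
      (isMatchedL M x = false ∧ ∃ c, ord.find? (qP G M x) = some c ∧
        rankingStepF G [] ord M x = (x, c) :: M) := by
  rw [step_eq]
  by_cases hm : isMatchedL M x = true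
  · simp [hm]
  · cases hf : ord.find? (qP G M x) with
    | none => simp [hm, hf]
    | some c =>
      right
      refine ⟨by simpa using hm, c, rfl, ?_⟩
      simp [hm]

lemma mem_step (ord : List V) (M : List (V × V)) (x : V) {p : V × V} (h : p ∈ M) :
    p ∈ rankingStepF G [] ord M x := by
  rcases step_cases G ord M x with h1 | ⟨_, c, _, h1⟩ <;> rw [h1]
  · exact h
  · exact List.mem_cons_of_mem _ h

lemma mem_runR (ord l : List V) {M : List (V × V)} {p : V × V} (h : p ∈ M) :
    p ∈ runR G ord l M := by
  induction l generalizing M with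
  | nil => exact h
  | cons a l ih => exact ih (mem_step G ord M a h)

lemma matched_runR (ord l : List V) {M : List (V × V)} {z : V}
    (h : isMatchedL M z = true) : isMatchedL (runR G ord l M) z = true :=
  isMatchedL_mono (fun p hp => mem_runR G ord l hp) h

lemma qP_of_subset {M M' : List (V × V)} (h : ∀ p ∈ M, p ∈ M') {x y : V}
    (hq : qP G M' x y = true) : qP G M x y = true := by
  simp only [qP, Bool.and_eq_true, Bool.not_eq_true'] at hq ⊢
  refine ⟨hq.1, ?_⟩
  by_contra hc
  simp only [Bool.not_eq_false] at hc
  rw [isMatchedL_mono h hc] at hq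
  exact absurd hq.2 (by simp)

end Infra
section Good

variable [DecidableEq V] (G : SimpleGraph V) [DecidableRel G.Adj]

/-- Validity of a partial matching: no loops and every vertex occurs at most once. -/
def GoodM (M : List (V × V)) : Prop :=
  (∀ p ∈ M, p.1 ≠ p.2) ∧ (M.flatMap fun p => [p.1, p.2]).Nodup

lemma matched_iff_mem_flat (M : List (V × V)) (z : V) :
    isMatchedL M z = true ↔ z ∈ M.flatMap fun p => [p.1, p.2] := by
  rw [isMatchedL_iff]
  simp only [List.mem_flatMap, List.mem_cons, List.mem_singleton]
  constructor
  · rintro ⟨p, hp, h | h⟩ <;> exact ⟨p, hp, by tauto⟩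
  · rintro ⟨p, hp, h⟩
    exact ⟨p, hp, by tauto⟩

lemma good_step (ord : List V) (M : List (V × V)) (x : V) (h : GoodM M) :
    GoodM (rankingStepF G [] ord M x) := by
  rcases step_cases G ord M x with h1 | ⟨hm, c, hf, h1⟩ <;> rw [h1]
  · exact h
  have hq : qP G M x c = true := List.find?_some hf
  simp only [qP, Bool.and_eq_true, decide_eq_true_eq, Bool.not_eq_true'] at hq
  have hadj : G.Adj x c := hq.1
  have hcm : isMatchedL M c = false := hq.2
  constructor
  · intro p hp
    rcases List.mem_cons.1 hp with rfl | hp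
    · exact hadj.ne
    · exact h.1 p hp
  · have : ((x, c) :: M).flatMap (fun p => [p.1, p.2]) = x :: c :: M.flatMap fun p => [p.1, p.2] := by
      simp
    rw [this]
    refine List.nodup_cons.2 ⟨?_, List.nodup_cons.2 ⟨?_, h.2⟩⟩
    · simp only [List.mem_cons]
      push_neg
      refine ⟨hadj.ne, fun hx => ?_⟩
      rw [← matched_iff_mem_flat] at hx
      rw [hx] at hm; exact absurd hm (by simp)
    · intro hx
      rw [← matched_iff_mem_flat] at hx
      rw [hx] at hcm; exact absurd hcm (by simp)

lemma good_runR (ord l : List V) {M : List (V × V)} (h : GoodM M) :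
    GoodM (runR G ord l M) := by
  induction l generalizing M with
  | nil => exact h
  | cons a l ih => exact ih (good_step G ord M a h)

lemma good_rankingList (ord : List V) : GoodM (rankingList G ord) :=
  good_runR G ord ord ⟨by simp, by simp⟩

lemma endpoint_unique {M : List (V × V)} (hnd : (M.flatMap fun p => [p.1, p.2]).Nodup)
    {x : V} {p q : V × V} (hp : p ∈ M) (hq : q ∈ M)
    (hxp : p.1 = x ∨ p.2 = x) (hxq : q.1 = x ∨ q.2 = x) : p = q := by
  induction M with
  | nil => simp at hp
  | cons r M ih =>
    have hnd2 : (M.flatMap fun p => [p.1, p.2]).Nodup := by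
      simp only [List.flatMap_cons] at hnd
      exact List.Nodup.of_append_right hnd
    have hr : ∀ s ∈ M, s.1 ≠ r.1 ∧ s.1 ≠ r.2 ∧ s.2 ≠ r.1 ∧ s.2 ≠ r.2 := by
      intro s hs
      simp only [List.flatMap_cons, List.nodup_append, List.nodup_cons] at hnd
      obtain ⟨-, -, hdisj⟩ := hnd
      have h1 : s.1 ∈ M.flatMap fun p => [p.1, p.2] := by
        simp only [List.mem_flatMap]; exact ⟨s, hs, by simp⟩
      have h2 : s.2 ∈ M.flatMap fun p => [p.1, p.2] := by
        simp only [List.mem_flatMap]; exact ⟨s, hs, by simp⟩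
      have d1 : r.1 ∉ M.flatMap fun p => [p.1, p.2] := fun hmem => hdisj _ (by simp) _ hmem rfl
      have d2 : r.2 ∉ M.flatMap fun p => [p.1, p.2] := fun hmem => hdisj _ (by simp) _ hmem rfl
      exact ⟨fun h => d1 (h ▸ h1), fun h => d2 (h ▸ h1),
             fun h => d1 (h ▸ h2), fun h => d2 (h ▸ h2)⟩
    rcases List.mem_cons.1 hp with rfl | hp' <;> rcases List.mem_cons.1 hq with rfl | hq'
    · rfl
    · exfalso
      have := hr q hq'
      rcases hxp with h1 | h1 <;> rcases hxq with h2 | h2 <;>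
        simp_all <;> tauto
    · exfalso
      have := hr p hp'
      rcases hxp with h1 | h1 <;> rcases hxq with h2 | h2 <;>
        simp_all <;> tauto
    · exact ih hnd2 hp' hq'

lemma matched_unique {M : List (V × V)} (h : GoodM M) {x c d : V}
    (h1 : (x, c) ∈ M ∨ (c, x) ∈ M) (h2 : (x, d) ∈ M ∨ (d, x) ∈ M) : c = d := by
  rcases h1 with h1 | h1 <;> rcases h2 with h2 | h2
  · have := endpoint_unique h.2 h1 h2 (Or.inl rfl) (Or.inl rfl)
    injection this with e1 e2
    all_goals first | exact e2 | exact e2.trans e1 | exact e1.trans e2 | exact e1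
  · have := endpoint_unique h.2 h1 h2 (Or.inl rfl) (Or.inr rfl)
    injection this with e1 e2
    all_goals first | exact e2 | exact e2.trans e1 | exact e1.trans e2 | exact e1
  · have := endpoint_unique h.2 h1 h2 (Or.inr rfl) (Or.inl rfl)
    injection this with e1 e2
    all_goals first | exact e2 | exact e2.trans e1 | exact e1.trans e2 | exact e1
  · have := endpoint_unique h.2 h1 h2 (Or.inr rfl) (Or.inr rfl)
    injection this with e1 e2
    all_goals first | exact e2 | exact e2.trans e1 | exact e1.trans e2 | exact e1

end Good
section Form

variable [DecidableEq V] (G : SimpleGraph V) [DecidableRel G.Adj]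

/-- Formation: where an edge of the run was created. -/
lemma mem_runR_cases (ord : List V) {l : List V} {M : List (V × V)} {e : V × V}
    (h : e ∈ runR G ord l M) :
    e ∈ M ∨ ∃ l₁ l₂ c, l = l₁ ++ e.1 :: l₂ ∧ e = (e.1, c) ∧
      isMatchedL (runR G ord l₁ M) e.1 = false ∧
      ord.find? (qP G (runR G ord l₁ M) e.1) = some c := by
  induction l generalizing M with
  | nil => exact Or.inl h
  | cons a l ih =>
    rw [runR_cons] at h
    rcases ih h with h' | ⟨l₁, l₂, c, rfl, he, hm, hf⟩
    · rcases step_cases G ord M a with h1 | ⟨hm, c, hf, h1⟩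
      · rw [h1] at h'; exact Or.inl h'
      · rw [h1] at h'
        rcases List.mem_cons.1 h' with rfl | h'
        · exact Or.inr ⟨[], l, c, rfl, rfl, hm, hf⟩
        · exact Or.inl h'
    · exact Or.inr ⟨a :: l₁, l₂, c, rfl, he, hm, hf⟩

/-- Components of edges belong to the ambient lists. -/
lemma mem_of_edge (ord : List V) {e : V × V} (h : e ∈ rankingList G ord) :
    e.1 ∈ ord ∧ e.2 ∈ ord := by
  rw [rankingList_eq_runR] at h
  rcases mem_runR_cases G ord h with h' | ⟨l₁, l₂, c, hl, he, hm, hf⟩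
  · simp at h'
  · constructor
    · rw [hl]; exact List.mem_append.2 (Or.inr (by simp))
    · have := List.mem_of_find?_eq_some hf
      rw [he]; exact this

end Form

section FindLemmas

variable {p : V → Bool}

lemma find?_middle {A B : List V} {v : V}
    (h : List.find? p (A ++ v :: B) ≠ some v) :
    List.find? p (A ++ B) = List.find? p (A ++ v :: B) := by
  rw [List.find?_append, List.find?_append]
  cases hA : A.find? p with
  | some a => rfl
  | none =>
    simp only [Option.none_or]
    cases hv : p v with
    | false =>
      have hv' : ¬(p v = true) := by simp [hv]
      rw [List.find?_cons_of_neg hv']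
    | true =>
      exfalso
      apply h
      rw [List.find?_append, hA, Option.none_or, List.find?_cons_of_pos hv]

lemma find?_swap {A C : List V} {v w : V}
    (h : List.find? p (A ++ v :: w :: C) ≠ some v) :
    List.find? p (A ++ w :: v :: C) = List.find? p (A ++ v :: w :: C) := by
  rw [List.find?_append, List.find?_append]
  cases hA : A.find? p with
  | some a => rfl
  | none =>
    simp only [Option.none_or]
    cases hv : p v with
    | true =>
      exfalso
      apply h
      rw [List.find?_append, hA, Option.none_or, List.find?_cons_of_pos hv]
    | false =>
      have hv' : ¬(p v = true) := by simp [hv]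
      cases hw : p w with
      | true =>
        rw [List.find?_cons_of_pos hw, List.find?_cons_of_neg hv',
          List.find?_cons_of_pos hw]
      | false =>
        have hw' : ¬(p w = true) := by simp [hw]
        rw [List.find?_cons_of_neg hw', List.find?_cons_of_neg hv',
          List.find?_cons_of_neg hv', List.find?_cons_of_neg hw']

lemma find?_mono {p' : V → Bool} {l : List V} {u : V}
    (h : List.find? p l = some u) (hu : p' u = true)
    (himp : ∀ x, p' x = true → p x = true) : List.find? p' l = some u := by
  induction l with
  | nil => simp at h
  | cons a l ih =>
    rw [List.find?_cons] at h ⊢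
    cases ha' : p' a
    · cases ha : p a
      · rw [ha] at h; exact ih h
      · rw [ha] at h
        injection h with h
        subst h
        rw [ha'] at hu; exact absurd hu (by simp)
    · have := himp a ha'
      rw [this] at h
      exact h

lemma find?_none_of_mem {l l' : List V} (hmem : ∀ x ∈ l', x ∈ l)
    (h : List.find? p l = none) : List.find? p l' = none := by
  rw [List.find?_eq_none] at h ⊢
  exact fun x hx => h x (hmem x hx)

lemma split_unique [DecidableEq V] {l₁ l₂ m₁ m₂ : List V} {x : V}
    (nd : (l₁ ++ x :: l₂).Nodup)
    (h : l₁ ++ x :: l₂ = m₁ ++ x :: m₂) : l₁ = m₁ ∧ l₂ = m₂ := by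
  have hx1 : x ∉ l₁ := by
    intro hx
    have := List.Nodup.of_append_right (l₁ := l₁) nd
    rcases List.nodup_append.1 nd with ⟨-, -, hdisj⟩
    exact hdisj _ hx _ (by simp) rfl
  have hx2 : x ∉ m₁ := by
    rw [h] at nd
    rcases List.nodup_append.1 nd with ⟨-, -, hdisj⟩
    intro hx
    exact hdisj _ hx _ (by simp) rfl
  have hlen : l₁.length = m₁.length := by
    have e1 : List.idxOf x (l₁ ++ x :: l₂) = l₁.length := by
      rw [List.idxOf_append_of_notMem hx1, List.idxOf_cons_self]; omega
    have e2 : List.idxOf x (m₁ ++ x :: m₂) = m₁.length := by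
      rw [List.idxOf_append_of_notMem hx2, List.idxOf_cons_self]; omega
    rw [h, e2] at e1
    omega
  obtain ⟨h1, h2⟩ := List.append_inj h hlen
  exact ⟨h1, by injection h2⟩

end FindLemmas
section Congr

variable [DecidableEq V] (G : SimpleGraph V) [DecidableRel G.Adj]

/-- Generic run-equality: if the find? results transfer between the two ambient orders
whenever the result is not `some v`, and `v` stays unmatched throughout the run of the
segment `l`, then both runs coincide. -/
lemma runR_congr {ord ord' : List V} {v : V}
    (htrans : ∀ (M : List (V × V)) (x : V),
      ord.find? (qP G M x) ≠ some v → ord'.find? (qP G M x) = ord.find? (qP G M x))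
    (l : List V) (M : List (V × V))
    (hv : isMatchedL (runR G ord l M) v = false) :
    runR G ord' l M = runR G ord l M := by
  induction l generalizing M with
  | nil => rfl
  | cons a l ih =>
    rw [runR_cons, runR_cons]
    rw [runR_cons] at hv
    have hvM : isMatchedL (rankingStepF G [] ord M a) v = false := by
      by_contra hc
      simp only [Bool.not_eq_false] at hc
      rw [matched_runR G ord l hc] at hv
      exact absurd hv (by simp)
    have hstep : rankingStepF G [] ord' M a = rankingStepF G [] ord M a := by
      by_cases hm : isMatchedL M a = true
      · rw [step_eq, step_eq, if_pos hm, if_pos hm]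
      · have hne : ord.find? (qP G M a) ≠ some v := by
          intro hf
          have : isMatchedL (rankingStepF G [] ord M a) v = true := by
            rw [step_eq, if_neg hm, hf, isMatchedL_iff]
            exact ⟨(a, v), by simp, by simp⟩
          rw [this] at hvM
          exact absurd hvM (by simp)
        rw [step_eq, step_eq, if_neg hm, if_neg hm, htrans M a hne]
    rw [hstep]
    exact ih _ hv

end Congr
section Helpers

variable [DecidableEq V] (G : SimpleGraph V) [DecidableRel G.Adj]

lemma qP_true_iff (M : List (V × V)) (x y : V) :
    qP G M x y = true ↔ G.Adj x y ∧ isMatchedL M y = false := by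
  simp [qP, Bool.and_eq_true, Bool.not_eq_true']

lemma qP_self (M : List (V × V)) (x : V) : qP G M x x = false := by
  simp [qP, G.irrefl]

lemma qP_matched {M : List (V × V)} {y : V} (h : isMatchedL M y = true) (x : V) :
    qP G M x y = false := by
  simp [qP, h]

lemma step_matched {M : List (V × V)} {x : V} (ord : List V)
    (h : isMatchedL M x = true) : rankingStepF G [] ord M x = M := by
  rw [step_eq, if_pos h]

lemma step_found {M : List (V × V)} {x c : V} {ord : List V}
    (h : isMatchedL M x = false) (hf : ord.find? (qP G M x) = some c) :
    rankingStepF G [] ord M x = (x, c) :: M := by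
  rw [step_eq, if_neg (by simp [h]), hf]

lemma step_none {M : List (V × V)} {x : V} {ord : List V}
    (h : isMatchedL M x = false) (hf : ord.find? (qP G M x) = none) :
    rankingStepF G [] ord M x = M := by
  rw [step_eq, if_neg (by simp [h]), hf]

lemma find?_of_step_eq {M : List (V × V)} {x : V} {ord : List V}
    (h : isMatchedL M x = false) (hs : rankingStepF G [] ord M x = M) :
    ord.find? (qP G M x) = none := by
  cases hf : ord.find? (qP G M x) with
  | none => rfl
  | some c =>
    exfalso
    rw [step_found G h hf] at hs
    simpa using congrArg List.length hs

lemma matched_of_mem {M : List (V × V)} {p : V × V} (hp : p ∈ M) {z : V}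
    (hz : p.1 = z ∨ p.2 = z) : isMatchedL M z = true :=
  (isMatchedL_iff M z).2 ⟨p, hp, hz⟩

lemma matched_cons_self₁ (M : List (V × V)) (a c : V) :
    isMatchedL ((a, c) :: M) a = true :=
  matched_of_mem (p := (a, c)) (List.mem_cons_self) (Or.inl rfl)

lemma matched_cons_self₂ (M : List (V × V)) (a c : V) :
    isMatchedL ((a, c) :: M) c = true :=
  matched_of_mem (p := (a, c)) (List.mem_cons_self) (Or.inr rfl)

lemma unmatched_cons {M : List (V × V)} {a c z : V} (ha : a ≠ z) (hc : c ≠ z)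
    (h : isMatchedL M z = false) : isMatchedL ((a, c) :: M) z = false := by
  by_contra hx
  simp only [Bool.not_eq_false] at hx
  rw [isMatchedL_iff] at hx
  obtain ⟨p, hp, hz⟩ := hx
  rcases List.mem_cons.1 hp with rfl | hp
  · simp at hz; tauto
  · rw [matched_of_mem hp hz] at h; simp at h

lemma find?_assemble {p : V → Bool} {A C : List V} {w v : V}
    (hA : List.find? p A = none) (hw : p w = false) (hv : p v = true) :
    List.find? p (A ++ w :: v :: C) = some v := by
  have hw' : ¬(p w = true) := by simp [hw]
  rw [List.find?_append, hA, Option.none_or, List.find?_cons_of_neg hw',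
    List.find?_cons_of_pos hv]

lemma find?_assemble₁ {p : V → Bool} {A C : List V} {w : V}
    (hA : List.find? p A = none) (hw : p w = true) :
    List.find? p (A ++ w :: C) = some w := by
  rw [List.find?_append, hA, Option.none_or, List.find?_cons_of_pos hw]

lemma find?_split {p : V → Bool} {A B : List V} {x : V}
    (h : List.find? p (A ++ B) = some x) (hx : x ∉ A) :
    List.find? p A = none ∧ List.find? p B = some x := by
  cases hA : List.find? p A with
  | none => rw [List.find?_append, hA, Option.none_or] at h; exact ⟨rfl, h⟩
  | some a =>
    exfalso
    rw [List.find?_append, hA] at h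
    simp only [Option.some_or, Option.some.injEq] at h
    subst h
    exact hx (List.mem_of_find?_eq_some hA)

lemma find?_none_mono {p p' : V → Bool} {l l' : List V}
    (h : List.find? p l = none) (hmem : ∀ x ∈ l', x ∈ l)
    (himp : ∀ x, p' x = true → p x = true) : List.find? p' l' = none := by
  rw [List.find?_eq_none] at h ⊢
  exact fun x hx hpx => h x (hmem x hx) (himp x hpx)

lemma find?_assemble₂ {p : V → Bool} {A C : List V} {w v u : V}
    (hA : List.find? p A = none) (hw : p w = false) (hv : p v = false)
    (hC : List.find? p C = some u) :
    List.find? p (A ++ w :: v :: C) = some u := by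
  have hw' : ¬(p w = true) := by simp [hw]
  have hv' : ¬(p v = true) := by simp [hv]
  rw [List.find?_append, hA, Option.none_or, List.find?_cons_of_neg hw',
    List.find?_cons_of_neg hv', hC]

end Helpers
section SwapMain

variable [DecidableEq V] (G : SimpleGraph V) [DecidableRel G.Adj]

lemma swap_main (A C : List V) (v w u b : V)
    (nd : (A ++ v :: w :: C).Nodup)
    (H1 : matchedTo G (A ++ v :: w :: C) u v)
    (H2 : matchedTo G (A ++ w :: C) u b)
    (hbw : b ≠ w) (hbA : b ∉ A) :
    matchedTo G (A ++ w :: v :: C) u v := by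
  classical
  obtain ⟨ndA, ndvwC, disj⟩ := List.nodup_append.1 nd
  have hvA : v ∉ A := fun h => disj _ h _ (by simp) rfl
  have hwA : w ∉ A := fun h => disj _ h _ (by simp) rfl
  obtain ⟨hvnot, ndwC⟩ := List.nodup_cons.1 ndvwC
  have hvw : v ≠ w := by simp only [List.mem_cons] at hvnot; tauto
  have hvC : v ∉ C := by simp only [List.mem_cons] at hvnot; tauto
  obtain ⟨hwC, ndC⟩ := List.nodup_cons.1 ndwC
  have goodL := good_rankingList G (A ++ w :: C)
  have memσ' : ∀ x : V, x ∈ A ++ w :: v :: C → x ∈ A ++ v :: w :: C := by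
    intro x hx; simp only [List.mem_append, List.mem_cons] at hx ⊢; tauto
  have memσ : ∀ x : V, x ∈ A ++ v :: w :: C → x ∈ A ++ w :: v :: C := by
    intro x hx; simp only [List.mem_append, List.mem_cons] at hx ⊢; tauto
  have memL : ∀ x : V, x ∈ A ++ w :: C → x ∈ A ++ v :: w :: C := by
    intro x hx; simp only [List.mem_append, List.mem_cons] at hx ⊢; tauto
  -- the three run-transfer principles
  have hSwap : ∀ (l : List V) (M : List (V × V)),
      isMatchedL (runR G (A ++ v :: w :: C) l M) v = false →
      runR G (A ++ w :: v :: C) l M = runR G (A ++ v :: w :: C) l M :=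
    fun l M hv => runR_congr G (fun M x h => find?_swap h) l M hv
  have hEσ : ∀ (l : List V) (M : List (V × V)),
      isMatchedL (runR G (A ++ v :: w :: C) l M) v = false →
      runR G (A ++ w :: C) l M = runR G (A ++ v :: w :: C) l M :=
    fun l M hv => runR_congr G (fun M x h => find?_middle h) l M hv
  have hEσ' : ∀ (l : List V) (M : List (V × V)),
      isMatchedL (runR G (A ++ w :: v :: C) l M) v = false →
      runR G (A ++ w :: C) l M = runR G (A ++ w :: v :: C) l M := by
    refine fun l M hv => runR_congr G (fun M x h => ?_) l M hv
    have h2 : List.find? (qP G M x) ((A ++ [w]) ++ v :: C) ≠ some v := by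
      simpa using h
    have := find?_middle (p := qP G M x) (A := A ++ [w]) (B := C) (v := v) h2
    simpa using this
  -- uniqueness of the backup
  have buW : ∀ c : V, ((u, c) ∈ rankingList G (A ++ w :: C) ∨
      (c, u) ∈ rankingList G (A ++ w :: C)) → b = c :=
    fun c h => matched_unique goodL H2 h
  rcases H1 with h1 | h1
  · -- edge (u, v) : u picked v
    rw [rankingList_eq_runR] at h1
    rcases mem_runR_cases G _ h1 with h' | ⟨l₁, l₂, c, hsplit, hec, hm, hf⟩
    · simp at h'
    simp only at hsplit hec hm hf
    injection hec with e1 e2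
    subst e2
    have hquv : qP G (runR G (A ++ v :: w :: C) l₁ []) u v = true := List.find?_some hf
    have hadjuv : G.Adj u v := ((qP_true_iff G _ u v).1 hquv).1
    have huv : u ≠ v := hadjuv.ne
    have humem : u ∈ A ++ v :: w :: C := by rw [hsplit]; simp
    simp only [List.mem_append, List.mem_cons] at humem
    rcases humem with huA | hu_v | huw | huC
    · -- u ∈ A
      obtain ⟨A₁, A₂, hAeq⟩ := List.append_of_mem huA
      have hsplit' : A₁ ++ u :: (A₂ ++ v :: w :: C) = l₁ ++ u :: l₂ := by
        rw [← hsplit, hAeq]; simp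
      have nd' : (A₁ ++ u :: (A₂ ++ v :: w :: C)).Nodup := by
        have h0 := nd
        rw [hAeq, List.append_assoc] at h0
        exact h0
      obtain ⟨rfl, rfl⟩ := split_unique nd' hsplit'
      set N₁ := runR G (A ++ v :: w :: C) A₁ [] with hN₁
      have hvfree₁ : isMatchedL N₁ v = false := ((qP_true_iff G _ u v).1 hquv).2
      have hfA : List.find? (qP G N₁ u) A = none := (find?_split hf hvA).1
      cases hqw : qP G N₁ u w with
      | true =>
        exfalso
        have hLA : runR G (A ++ w :: C) A₁ [] = N₁ := hEσ A₁ [] hvfree₁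
        have hfL : List.find? (qP G N₁ u) (A ++ w :: C) = some w :=
          find?_assemble₁ hfA hqw
        have hstepL := step_found G hm hfL
        have hLdec : A ++ w :: C = A₁ ++ u :: (A₂ ++ w :: C) := by
          rw [hAeq, List.append_assoc]; rfl
        have hmemL : (u, w) ∈ rankingList G (A ++ w :: C) := by
          rw [rankingList_eq_runR, hLdec]
          rw [hLdec] at hLA hstepL
          rw [runR_append, hLA, runR_cons, hstepL]
          exact mem_runR G _ _ (by simp)
        exact hbw (buW w (Or.inl hmemL))
      | false =>
        have hfσ' : List.find? (qP G N₁ u) (A ++ w :: v :: C) = some v :=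
          find?_assemble hfA hqw hquv
        have hstep := step_found G hm hfσ'
        have hNσ' : runR G (A ++ w :: v :: C) A₁ [] = N₁ := hSwap A₁ [] hvfree₁
        left
        have hσ'dec : A ++ w :: v :: C = A₁ ++ u :: (A₂ ++ w :: v :: C) := by
          rw [hAeq, List.append_assoc]; rfl
        rw [rankingList_eq_runR, hσ'dec]
        rw [hσ'dec] at hNσ' hstep
        rw [runR_append, hNσ', runR_cons, hstep]
        exact mem_runR G _ _ (by simp)
    · exact absurd hu_v huv
    · -- u = w
      subst huw
      have hsplit' : (A ++ [v]) ++ u :: C = l₁ ++ u :: l₂ := by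
        rw [← hsplit]; simp
      have nd' : ((A ++ [v]) ++ u :: C).Nodup := by
        rw [List.append_assoc]; exact nd
      obtain ⟨rfl, rfl⟩ := split_unique nd' hsplit'
      have hdecN : runR G (A ++ v :: u :: C) (A ++ [v]) [] =
          rankingStepF G [] (A ++ v :: u :: C) (runR G (A ++ v :: u :: C) A []) v := by
        rw [runR_append]; rfl
      rw [hdecN] at hm hf hquv
      have hvfree₁ : isMatchedL
          (rankingStepF G [] (A ++ v :: u :: C) (runR G (A ++ v :: u :: C) A []) v) v
          = false := ((qP_true_iff G _ u v).1 hquv).2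
      have hstepv : rankingStepF G [] (A ++ v :: u :: C)
          (runR G (A ++ v :: u :: C) A []) v = runR G (A ++ v :: u :: C) A [] := by
        rcases step_cases G (A ++ v :: u :: C) (runR G (A ++ v :: u :: C) A []) v with
          h | ⟨_, c', hf', h⟩
        · exact h
        · exfalso
          rw [h] at hvfree₁
          rw [matched_cons_self₁] at hvfree₁
          simp at hvfree₁
      rw [hstepv] at hm hf hquv hvfree₁
      have hfA : List.find? (qP G (runR G (A ++ v :: u :: C) A []) u) A = none :=
        (find?_split hf hvA).1
      have hNσ' : runR G (A ++ u :: v :: C) A [] = runR G (A ++ v :: u :: C) A [] :=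
        hSwap A [] hvfree₁
      have hfσ' : List.find? (qP G (runR G (A ++ v :: u :: C) A []) u)
          (A ++ u :: v :: C) = some v :=
        find?_assemble hfA (qP_self G _ u) hquv
      have hstep := step_found G hm hfσ'
      left
      rw [rankingList_eq_runR]
      have hdec2 : runR G (A ++ u :: v :: C) (A ++ u :: v :: C) [] =
          runR G (A ++ u :: v :: C) (v :: C)
            (rankingStepF G [] (A ++ u :: v :: C)
              (runR G (A ++ v :: u :: C) A []) u) := by
        rw [runR_append, hNσ', runR_cons]
      rw [hdec2, hstep]
      exact mem_runR G _ _ (by simp)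
    · -- u ∈ C
      obtain ⟨C₁, C₂, hCeq⟩ := List.append_of_mem huC
      subst hCeq
      have hsplit' : (A ++ v :: w :: C₁) ++ u :: C₂ = l₁ ++ u :: l₂ := by
        rw [← hsplit, List.append_assoc]; rfl
      have nd' : ((A ++ v :: w :: C₁) ++ u :: C₂).Nodup := by
        rw [List.append_assoc]; exact nd
      obtain ⟨rfl, rfl⟩ := split_unique nd' hsplit'
      set σ := A ++ v :: w :: (C₁ ++ u :: C₂) with hσdef
      set σ' := A ++ w :: v :: (C₁ ++ u :: C₂) with hσ'def
      set Lo := A ++ w :: (C₁ ++ u :: C₂) with hLodef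
      set NT := runR G σ (A ++ v :: w :: C₁) [] with hNT
      set N := runR G σ A [] with hN
      have hvT : isMatchedL NT v = false := ((qP_true_iff G _ u v).1 hquv).2
      have hdec0 : NT = runR G σ (v :: w :: C₁) N := by
        rw [hNT, hN, ← runR_append]
      have hNv : isMatchedL N v = false := by
        by_contra hc
        simp only [Bool.not_eq_false] at hc
        have : isMatchedL NT v = true := by
          rw [hdec0]; exact matched_runR G _ _ hc
        rw [this] at hvT; simp at hvT
      have hstepv : rankingStepF G [] σ N v = N := by
        rcases step_cases G σ N v with h | ⟨_, c', hf', h⟩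
        · exact h
        · exfalso
          have hmem : (v, c') ∈ NT := by
            rw [hdec0, runR_cons]
            exact mem_runR G _ _ (by rw [h]; simp)
          rw [matched_of_mem hmem (Or.inl rfl)] at hvT
          simp at hvT
      have hfvnone : List.find? (qP G N v) σ = none := find?_of_step_eq G hNv hstepv
      have hdec1 : NT = runR G σ C₁ (rankingStepF G [] σ N w) := by
        rw [hdec0, runR_cons, hstepv, runR_cons]
      have hfA : List.find? (qP G NT u) A = none := (find?_split hf hvA).1
      have hNσ'A : runR G σ' A [] = N := hSwap A [] hNv
      -- shared final step when w is not available for u in σ'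
      have finishC : ∀ N₂ : List (V × V),
          rankingStepF G [] σ' N w = N₂ →
          rankingStepF G [] σ' N₂ v = N₂ →
          runR G σ' C₁ N₂ = NT →
          qP G NT u w = false →
          (u, v) ∈ rankingList G σ' ∨ (v, u) ∈ rankingList G σ' := by
        intro N₂ hstepw hstepv' hC₁ hquw
        have hfσ' : List.find? (qP G NT u) σ' = some v := by
          rw [hσ'def]
          exact find?_assemble hfA hquw hquv
        have hstepu := step_found G hm hfσ'
        left
        rw [rankingList_eq_runR]
        have hfin : runR G σ' σ' [] =
            runR G σ' C₂ (rankingStepF G [] σ' NT u) := by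
          conv_lhs => rw [hσ'def]
          rw [runR_append, ← hσ'def, hNσ'A, runR_cons, hstepw, runR_cons, hstepv',
            runR_append, hC₁, runR_cons]
        rw [hfin, hstepu]
        exact mem_runR G _ _ (by simp)
      -- contradiction maker: if u could take w in the backup run
      have contraL : runR G Lo C₁ (rankingStepF G [] Lo N w) = NT →
          rankingStepF G [] Lo N w = rankingStepF G [] σ N w →
          qP G NT u w = true → False := by
        intro hLC₁ hstepLw hquw
        have hfL : List.find? (qP G NT u) Lo = some w := by
          rw [hLodef]
          exact find?_assemble₁ hfA hquw
        have hstepLu := step_found G hm hfL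
        have hmemL : (u, w) ∈ rankingList G Lo := by
          rw [rankingList_eq_runR]
          have hfin : runR G Lo Lo [] = runR G Lo C₂ (rankingStepF G [] Lo NT u) := by
            conv_lhs => rw [hLodef]
            rw [runR_append, ← hLodef]
            have hLA : runR G Lo A [] = N := hEσ A [] hNv
            rw [hLA, runR_cons, runR_append, hLC₁, runR_cons]
          rw [hfin, hstepLu]
          exact mem_runR G _ _ (by simp)
        exact hbw (buW w (Or.inl hmemL))
      by_cases hmw : isMatchedL N w = true
      · -- w already matched before its slot
        have hstepwσ : rankingStepF G [] σ N w = N := step_matched G _ hmw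
        have hdec1' : NT = runR G σ C₁ N := by rw [hdec1, hstepwσ]
        have hstepwσ' : rankingStepF G [] σ' N w = N := step_matched G _ hmw
        have hstepvσ' : rankingStepF G [] σ' N v = N :=
          step_none G hNv (find?_none_mono hfvnone (by
            intro x hx; rw [hσ'def] at hx; rw [hσdef]; exact memσ' x hx) (fun x hx => hx))
        have hC₁ : runR G σ' C₁ N = NT := by
          rw [hdec1'] at hvT ⊢
          exact hSwap C₁ N hvT
        cases hquw : qP G NT u w with
        | true =>
          exact absurd hquw (by
            intro hq
            refine contraL ?_ (by rw [hstepwσ, step_matched G _ hmw]) hq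
            rw [step_matched G _ hmw, hdec1']
            rw [hdec1'] at hvT
            exact hEσ C₁ N hvT)
        | false => exact finishC N hstepwσ' hstepvσ' hC₁ hquw
      · -- w free at its slot
        simp only [Bool.not_eq_true] at hmw
        cases hfw : List.find? (qP G N w) σ' with
        | none =>
          have hfwσ : List.find? (qP G N w) σ = none :=
            find?_none_mono hfw (by
              intro x hx; rw [hσdef] at hx; rw [hσ'def]; exact memσ x hx)
              (fun x hx => hx)
          have hstepwσ : rankingStepF G [] σ N w = N := step_none G hmw hfwσ
          have hdec1' : NT = runR G σ C₁ N := by rw [hdec1, hstepwσ]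
          have hstepwσ' : rankingStepF G [] σ' N w = N := step_none G hmw hfw
          have hstepvσ' : rankingStepF G [] σ' N v = N :=
            step_none G hNv (find?_none_mono hfvnone (by
              intro x hx; rw [hσ'def] at hx; rw [hσdef]; exact memσ' x hx)
              (fun x hx => hx))
          have hC₁ : runR G σ' C₁ N = NT := by
            rw [hdec1'] at hvT ⊢
            exact hSwap C₁ N hvT
          cases hquw : qP G NT u w with
          | true =>
            exact absurd hquw (by
              intro hq
              have hfwL : List.find? (qP G N w) Lo = none :=
                find?_none_mono hfwσ (by
                  intro x hx; rw [hLodef] at hx; rw [hσdef]; exact memL x hx)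
                  (fun x hx => hx)
              refine contraL ?_ (by rw [hstepwσ, step_none G hmw hfwL]) hq
              rw [step_none G hmw hfwL, hdec1']
              rw [hdec1'] at hvT
              exact hEσ C₁ N hvT)
          | false => exact finishC N hstepwσ' hstepvσ' hC₁ hquw
        | some c =>
          have hqc : qP G N w c = true := List.find?_some hfw
          have hcw : c ≠ w := fun h => by rw [h, qP_self] at hqc; simp at hqc
          have hqvwF : qP G N v w = false := by
            rw [List.find?_eq_none] at hfvnone
            have := hfvnone w (by rw [hσdef]; simp)
            simpa using this
          have hadjvwF : ¬ G.Adj v w := by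
            intro hadj
            have : qP G N v w = true := by
              rw [qP_true_iff]; exact ⟨hadj, hmw⟩
            rw [this] at hqvwF; simp at hqvwF
          have hcv : c ≠ v := by
            intro h
            subst h
            rw [qP_true_iff] at hqc
            exact hadjvwF hqc.1.symm
          have hfwσ : List.find? (qP G N w) σ = some c := by
            rw [hσdef]
            rw [hσ'def] at hfw
            exact find?_swap (A := A) (C := C₁ ++ u :: C₂) (v := w) (w := v)
              (by rw [hfw]; exact fun h => hcw (by injection h)) |>.symm ▸ hfw
          have hstepwσ : rankingStepF G [] σ N w = (w, c) :: N := step_found G hmw hfwσ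
          have hfwL : List.find? (qP G N w) Lo = some c := by
            have h2 : List.find? (qP G N w) ((A ++ [w]) ++ v :: (C₁ ++ u :: C₂)) ≠ some v := by
              have : List.find? (qP G N w) σ' ≠ some v := by
                rw [hfw]; exact fun h => hcv (by injection h)
              rw [hσ'def] at this
              simpa using this
            have h3 := find?_middle (p := qP G N w) (A := A ++ [w]) (B := C₁ ++ u :: C₂)
              (v := v) h2
            rw [hLodef]
            have h4 : List.find? (qP G N w) (A ++ [w] ++ v :: (C₁ ++ u :: C₂)) = some c := by
              rw [hσ'def] at hfw
              simpa using hfw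
            rw [h4] at h3
            simpa using h3
          by_cases hcu : c = u
          · -- u is the backup partner of w: contradiction with b ≠ w
            exfalso
            subst hcu
            have hLA : runR G Lo A [] = N := hEσ A [] hNv
            have hstepLw := step_found G hmw hfwL
            have hmemL : (w, c) ∈ rankingList G Lo := by
              rw [rankingList_eq_runR]
              have hfin : runR G Lo Lo [] =
                  runR G Lo (C₁ ++ c :: C₂) (rankingStepF G [] Lo N w) := by
                conv_lhs => rw [hLodef]
                rw [runR_append, ← hLodef, hLA, runR_cons]
              rw [hfin, hstepLw]
              exact mem_runR G _ _ (by simp)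
            exact hbw (buW w (Or.inr hmemL))
          · -- main path
            have hdec1' : NT = runR G σ C₁ ((w, c) :: N) := by rw [hdec1, hstepwσ]
            have hstepwσ' : rankingStepF G [] σ' N w = (w, c) :: N := step_found G hmw hfw
            have hsub : ∀ p ∈ N, p ∈ (w, c) :: N := fun p hp => List.mem_cons_of_mem _ hp
            have hv₂ : isMatchedL ((w, c) :: N) v = false :=
              unmatched_cons (Ne.symm hvw) hcv hNv
            have hstepvσ' : rankingStepF G [] σ' ((w, c) :: N) v = (w, c) :: N :=
              step_none G hv₂ (find?_none_mono hfvnone (by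
                intro x hx; rw [hσ'def] at hx; rw [hσdef]; exact memσ' x hx)
                (fun x => qP_of_subset G hsub))
            have hC₁ : runR G σ' C₁ ((w, c) :: N) = NT := by
              rw [hdec1'] at hvT ⊢
              exact hSwap C₁ _ hvT
            have hwNT : isMatchedL NT w = true := by
              have : (w, c) ∈ NT := by
                rw [hdec1']
                exact mem_runR G _ _ (by simp)
              exact matched_of_mem this (Or.inl rfl)
            exact finishC ((w, c) :: N) hstepwσ' hstepvσ' hC₁ (qP_matched G hwNT u)
  · -- edge (v, u) : v picked u
    rw [rankingList_eq_runR] at h1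
    rcases mem_runR_cases G _ h1 with h' | ⟨l₁, l₂, c, hsplit, hec, hm, hf⟩
    · simp at h'
    simp only at hsplit hec hm hf
    injection hec with e1 e2
    subst e2
    obtain ⟨hl₁, hl₂⟩ := split_unique nd hsplit
    subst hl₁
    -- so l₂ = w :: C and the state is N = runR σ A []
    have hl₂' : l₂ = w :: C := hl₂.symm
    subst hl₂'
    set N := runR G (A ++ v :: w :: C) A [] with hN
    have hqvu : qP G N v u = true := List.find?_some hf
    have hadjvu : G.Adj v u := ((qP_true_iff G _ v u).1 hqvu).1
    have hufree : isMatchedL N u = false := ((qP_true_iff G _ v u).1 hqvu).2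
    have huv : u ≠ v := hadjvu.ne'
    -- u cannot lie in A
    have huA : u ∉ A := by
      intro huA0
      obtain ⟨A₁, A₂, hAeq⟩ := List.append_of_mem huA0
      rw [hAeq] at hN
      rw [runR_append, runR_cons] at hN
      set ord := (A₁ ++ u :: A₂) ++ v :: w :: C with hord
      set N₁ := runR G ord A₁ [] with hN₁
      have hfree₁ : isMatchedL N₁ u = false := by
        by_contra hc
        simp only [Bool.not_eq_false] at hc
        have hx : isMatchedL N u = true := by
          rw [hN]
          exact matched_runR G ord A₂
            (isMatchedL_mono (fun p hp => mem_step G ord N₁ u hp) hc)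
        rw [hx] at hufree; simp at hufree
      have hvfree₁ : isMatchedL N₁ v = false := by
        by_contra hc
        simp only [Bool.not_eq_false] at hc
        have hx : isMatchedL N v = true := by
          rw [hN]
          exact matched_runR G ord A₂
            (isMatchedL_mono (fun p hp => mem_step G ord N₁ u hp) hc)
        rw [hx] at hm; simp at hm
      have hqv₁ : qP G N₁ u v = true := by
        rw [qP_true_iff]; exact ⟨hadjvu.symm, hvfree₁⟩
      cases hfind : ord.find? (qP G N₁ u) with
      | none =>
        rw [List.find?_eq_none] at hfind
        exact absurd hqv₁ (by simpa using hfind v (by rw [hord]; simp))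
      | some c' =>
        have hstep := step_found G hfree₁ hfind
        have hx : isMatchedL N u = true := by
          rw [hN]
          refine matched_runR G ord A₂ ?_
          rw [hstep]
          exact matched_cons_self₁ _ _ _
        rw [hx] at hufree; simp at hufree
    have humem : u ∈ A ++ v :: w :: C := List.mem_of_find?_eq_some hf
    simp only [List.mem_append, List.mem_cons] at humem
    have humem' : u = w ∨ u ∈ C := by tauto
    -- decompose v's find
    obtain ⟨hfA, hfR⟩ := find?_split (A := A) hf huA
    rcases humem' with huw | huC
    · -- u = w : in σ', u itself grabs v
      subst huw
      -- from the scan of v : qP G N v u is true at position of w(=u)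
      have hquw : qP G N v u = true := hqvu
      have hufree' : isMatchedL N u = false := hufree
      -- w's find over A decides
      cases hrA : List.find? (qP G N u) A with
      | some c =>
        -- in L, u(=w) would match c ∈ A: backup in A, contradiction
        exfalso
        have hLA : runR G (A ++ u :: C) A [] = N := by
          rw [hN]; exact hEσ A [] (by rw [← hN]; exact hm)
        have hfL : List.find? (qP G N u) (A ++ u :: C) = some c := by
          rw [List.find?_append, hrA]; rfl
        have hstepL := step_found G hufree' hfL
        have hmemL : (u, c) ∈ rankingList G (A ++ u :: C) := by
          rw [rankingList_eq_runR]
          have : runR G (A ++ u :: C) (A ++ u :: C) [] =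
              runR G (A ++ u :: C) C (rankingStepF G [] (A ++ u :: C) N u) := by
            rw [runR_append, runR_cons, hLA]
          rw [this, hstepL]
          exact mem_runR G _ _ (by simp)
        have := buW c (Or.inl hmemL)
        subst this
        exact hbA (List.mem_of_find?_eq_some hrA)
      | none =>
        -- u(=w) picks v in σ'
        have hadjwv : G.Adj u v := hadjvu.symm
        have hquv' : qP G N u v = true := by
          rw [qP_true_iff]; exact ⟨hadjwv, hm⟩
        have hfσ' : List.find? (qP G N u) (A ++ u :: v :: C) = some v :=
          find?_assemble hrA (qP_self G N u) hquv'
        have hstep := step_found G hufree' hfσ'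
        have hNσ' : runR G (A ++ u :: v :: C) A [] = N := by
          rw [hN]; exact hSwap A [] (by rw [← hN]; exact hm)
        left
        rw [rankingList_eq_runR]
        have hdec : runR G (A ++ u :: v :: C) (A ++ u :: v :: C) [] =
            runR G (A ++ u :: v :: C) (v :: C)
              (rankingStepF G [] (A ++ u :: v :: C) N u) := by
          rw [runR_append, runR_cons, hNσ']
        rw [hdec, hstep]
        exact mem_runR G _ _ (by simp)
    · -- u ∈ C
      have huw : u ≠ w := fun h => hwC (h ▸ huC)
      -- decompose the rest of v's scan
      have hfR' : List.find? (qP G N v) (w :: C) = some u := by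
        have hv' : ¬(qP G N v v = true) := by simp [qP_self]
        rw [List.find?_cons_of_neg hv'] at hfR
        exact hfR
      have hqvw : qP G N v w = false := by
        by_contra hc
        simp only [Bool.not_eq_false] at hc
        rw [List.find?_cons_of_pos hc] at hfR'
        injection hfR' with h'
        exact huw h'.symm
      have hfC : List.find? (qP G N v) C = some u := by
        have hw' : ¬(qP G N v w = true) := by simp [hqvw]
        rw [List.find?_cons_of_neg hw'] at hfR'
        exact hfR'
      -- case on w's step in σ'
      have finish_with_state : ∀ N₂ : List (V × V),
          rankingStepF G [] (A ++ w :: v :: C) N w = N₂ →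
          isMatchedL N₂ v = false → isMatchedL N₂ u = false →
          (∀ p ∈ N, p ∈ N₂) →
          List.find? (qP G N₂ v) (A ++ w :: v :: C) = some u →
          matchedTo G (A ++ w :: v :: C) u v := by
        intro N₂ hstepw hv₂ hu₂ hsub hfind₂
        have hstepv := step_found G hv₂ hfind₂
        have hNσ' : runR G (A ++ w :: v :: C) A [] = N := by
          rw [hN]; exact hSwap A [] (by rw [← hN]; exact hm)
        right
        rw [rankingList_eq_runR]
        have hdec : runR G (A ++ w :: v :: C) (A ++ w :: v :: C) [] =
            runR G (A ++ w :: v :: C) C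
              (rankingStepF G [] (A ++ w :: v :: C) N₂ v) := by
          rw [runR_append, runR_cons, runR_cons, hNσ', hstepw]
        rw [hdec, hstepv]
        exact mem_runR G _ _ (by simp)
      by_cases hmw : isMatchedL N w = true
      · refine finish_with_state N (step_matched G _ hmw) hm hufree (fun p hp => hp) ?_
        rw [find?_swap (p := qP G N v)
          (by rw [hf]; simp only [ne_eq, Option.some.injEq]; exact huv)]
        exact hf
      · cases hfw : List.find? (qP G N w) (A ++ w :: v :: C) with
        | none =>
          refine finish_with_state N (step_none G (by simpa using hmw) hfw) hm hufree
            (fun p hp => hp) ?_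
          rw [find?_swap (p := qP G N v)
            (by rw [hf]; simp only [ne_eq, Option.some.injEq]; exact huv)]
          exact hf
        | some c =>
          have hqc : qP G N w c = true := List.find?_some hfw
          have hcw : c ≠ w := fun h => by rw [h, qP_self] at hqc; simp at hqc
          have hcv : c ≠ v := by
            intro h
            rw [h] at hqc
            rw [qP_true_iff] at hqc
            have hx : qP G N v w = true := by
              rw [qP_true_iff]
              exact ⟨hqc.1.symm, by simpa using hmw⟩
            rw [hx] at hqvw; simp at hqvw
          have hfwL : List.find? (qP G N w) (A ++ w :: C) = some c := by
            have h5 : (A ++ [w]) ++ v :: C = A ++ w :: v :: C := by simp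
            have h2 : List.find? (qP G N w) ((A ++ [w]) ++ v :: C) ≠ some v := by
              rw [h5, hfw]
              simp only [ne_eq, Option.some.injEq]
              exact hcv
            have h3 := find?_middle (p := qP G N w) (A := A ++ [w]) (B := C) (v := v) h2
            have h4 : (A ++ [w]) ++ C = A ++ w :: C := by simp
            rw [h4, h5, hfw] at h3
            exact h3
          by_cases hcu : c = u
          · -- u would be the backup's partner w: contradiction
            exfalso
            have hLA : runR G (A ++ w :: C) A [] = N := by
              rw [hN]; exact hEσ A [] (by rw [← hN]; exact hm)
            have hstepL := step_found G (by simpa using hmw) hfwL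
            have hmemL : (w, c) ∈ rankingList G (A ++ w :: C) := by
              rw [rankingList_eq_runR]
              have : runR G (A ++ w :: C) (A ++ w :: C) [] =
                  runR G (A ++ w :: C) C (rankingStepF G [] (A ++ w :: C) N w) := by
                rw [runR_append, runR_cons, hLA]
              rw [this, hstepL]
              exact mem_runR G _ _ (by simp)
            rw [hcu] at hmemL
            exact hbw (buW w (Or.inr hmemL))
          · -- main: w matches c elsewhere, v still picks u
            have hstepw := step_found G (by simpa using hmw) hfw
            refine finish_with_state ((w, c) :: N) hstepw
              (unmatched_cons (Ne.symm hvw) hcv hm)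
              (unmatched_cons (Ne.symm huw) hcu hufree)
              (fun p hp => List.mem_cons_of_mem _ hp) ?_
            have hsub : ∀ p ∈ N, p ∈ (w, c) :: N := fun p hp => List.mem_cons_of_mem _ hp
            refine find?_assemble₂ ?_ ?_ ?_ ?_
            · exact find?_none_mono hfA (fun x hx => hx) (fun x => qP_of_subset G hsub)
            · exact qP_matched G (matched_cons_self₁ _ _ _) v
            · exact qP_self G _ v
            · refine find?_mono hfC ?_ (fun x => qP_of_subset G hsub)
              rw [qP_true_iff]
              exact ⟨hadjvu, unmatched_cons (Ne.symm huw) hcu hufree⟩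
end SwapMain
section FinalAux

lemma insertIdx_eq' (l : List V) (n : ℕ) (h : n ≤ l.length) (v : V) :
    l.insertIdx n v = l.take n ++ v :: l.drop n := by
  induction l generalizing n with
  | nil => simp at h; simp [h]
  | cons a l ih =>
    cases n with
    | zero => simp
    | succ n => simp only [List.insertIdx_succ_cons, List.take_succ_cons,
        List.drop_succ_cons, List.cons_append, ih n (by simpa using h)]

lemma indexOf_append_lt [DecidableEq V] {a : V} {l₁ : List V} (l₂ : List V)
    (h : a ∈ l₁) : List.idxOf a (l₁ ++ l₂) < l₁.length := by
  induction l₁ with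
  | nil => simp at h
  | cons c t ih =>
    by_cases hac : c = a
    · subst hac
      simp [List.idxOf_cons_self]
    · rw [List.cons_append, List.idxOf_cons_ne _ hac]
      have : a ∈ t := by rcases List.mem_cons.1 h with h' | h'; exact absurd h'.symm hac; exact h'
      simpa using Nat.succ_lt_succ (ih this)

end FinalAux
/-- Monotonicity with backup: if Ranking on `σ` matches `u` to `v` and `u` has backup `b`
(its match after removing `v`) with `σ(b) > σ(v) + 1`, then for every `i` with
`σ(v) ≤ i < σ(b)`, in the permutation obtained by moving `v` to rank `i` Ranking still
matches `u` to `v`, `u` still has backup `b`, and `b` keeps its rank.  (The case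
`i = σ(v) + 1` is the swap of `v` with its successor.) -/
theorem stmt18 {V : Type*} [DecidableEq V] (G : SimpleGraph V) [DecidableRel G.Adj]
    (order : List V) (hnd : order.Nodup) (u v b : V) (hv : v ∈ order)
    (hmatch : matchedTo G order u v)
    (hbackup : matchedTo G (order.erase v) u b)
    (hrank : order.idxOf v + 1 < order.idxOf b) :
    ∀ i : ℕ, order.idxOf v ≤ i → i < order.idxOf b →
      matchedTo G ((order.erase v).insertIdx i v) u v ∧
      matchedTo G ((((order.erase v).insertIdx i v)).erase v) u b ∧
      ((order.erase v).insertIdx i v).idxOf b = order.idxOf b := by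
  classical
  intro i hik hiB
  set k := order.idxOf v with hk
  set B := order.idxOf b with hB
  set L := order.erase v with hL0
  -- basic structure of `order`
  have hkl : k < order.length := List.idxOf_lt_length_iff.2 hv
  have hgk : order[k]'hkl = v := List.getElem_idxOf hkl
  have hsplit : order = order.take k ++ v :: order.drop (k + 1) := by
    conv_lhs => rw [← List.take_append_drop k order]
    rw [List.drop_eq_getElem_cons hkl, hgk]
  set o₁ := order.take k with ho₁
  set o₂ := order.drop (k + 1) with ho₂
  have hlen₁ : o₁.length = k := by
    rw [ho₁, List.length_take]; omega
  have nd2 : (o₁ ++ v :: o₂).Nodup := by rw [← hsplit]; exact hnd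
  obtain ⟨ndo₁, ndvo₂, disj⟩ := List.nodup_append.1 nd2
  have hvo₁ : v ∉ o₁ := fun h => disj _ h _ (by simp) rfl
  have hLsplit : L = o₁ ++ o₂ := by
    rw [hL0]
    conv_lhs => rw [hsplit]
    rw [List.erase_append_right _ hvo₁, List.erase_cons_head]
  have ndL : L.Nodup := hnd.erase v
  have hvL : v ∉ L := hnd.not_mem_erase
  -- membership of b
  have hbmemL : b ∈ L := by
    rcases hbackup with h | h
    · exact (mem_of_edge G _ h).2
    · exact (mem_of_edge G _ h).1
  have hbmem : b ∈ order := List.mem_of_mem_erase hbmemL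
  have hbB : B < order.length := List.idxOf_lt_length_iff.2 hbmem
  have hbv : b ≠ v := fun h => hvL (h ▸ hbmemL)
  have hbo₁ : b ∉ o₁ := by
    intro h
    have hlt : List.idxOf b (o₁ ++ v :: o₂) < o₁.length := indexOf_append_lt _ h
    rw [← hsplit, ← hB, hlen₁] at hlt
    omega
  have hBeq : B = k + (List.idxOf b o₂ + 1) := by
    rw [hB]
    conv_lhs => rw [hsplit]
    rw [List.idxOf_append_of_notMem hbo₁, hlen₁, List.idxOf_cons_ne _ (Ne.symm hbv)]
  have hidxL : List.idxOf b L = B - 1 := by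
    rw [hLsplit, List.idxOf_append_of_notMem hbo₁, hlen₁]
    omega
  have hLlen : L.length = order.length - 1 := by
    rw [hL0, List.length_erase, if_pos hv]
  have hkB : k + 1 < B := hrank
  have hiL : i ≤ L.length := by omega
  -- b is not among the first j elements of L, for j < B
  have hbtake : ∀ j : ℕ, j < B → b ∉ L.take j := by
    intro j hj hmem
    have h1 : List.idxOf b (L.take j ++ L.drop j) < (L.take j).length :=
      indexOf_append_lt _ hmem
    rw [List.take_append_drop] at h1
    have h2 : (L.take j).length ≤ j := by simp [List.length_take]
    omega
  have hidxdrop : ∀ j : ℕ, j < B → j ≤ L.length →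
      List.idxOf b (L.drop j) = B - 1 - j := by
    intro j hj hjL
    have h1 : List.idxOf b (L.take j ++ L.drop j) =
        (L.take j).length + List.idxOf b (L.drop j) :=
      List.idxOf_append_of_notMem (hbtake j hj)
    rw [List.take_append_drop] at h1
    have h2 : (L.take j).length = j := by simp [List.length_take]; omega
    rw [hidxL, h2] at h1
    omega
  refine ⟨?_, ?_, ?_⟩
  · -- main monotonicity, by induction on i starting from k
    have key : ∀ j : ℕ, k ≤ j → j < B → matchedTo G (L.insertIdx j v) u v := by
      intro j hj
      induction j, hj using Nat.le_induction with
      | base =>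
        intro _
        have : L.insertIdx k v = order := by
          rw [insertIdx_eq' L k (by omega) v, hLsplit, ← hlen₁, List.take_left,
            List.drop_left]
          exact hsplit.symm
        rw [this]
        exact hmatch
      | succ n hn ih =>
        intro hnB
        have hn' : n < B := by omega
        have Hn := ih hn'
        have hnL : n < L.length := by omega
        have hdropn : L.drop n = L[n] :: L.drop (n + 1) := List.drop_eq_getElem_cons hnL
        have htaken : L.take (n + 1) = L.take n ++ [L[n]] := by
          rw [List.take_succ, List.getElem?_eq_getElem hnL]
          rfl
        -- nodup of the n-th arrangement
        have ndn : (L.take n ++ v :: L[n] :: L.drop (n + 1)).Nodup := by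
          have hperm : L.take n ++ v :: (L[n] :: L.drop (n + 1)) ~
              v :: (L.take n ++ (L[n] :: L.drop (n + 1))) := List.perm_middle
          rw [hperm.nodup_iff, ← hdropn, List.take_append_drop]
          exact List.nodup_cons.2 ⟨hvL, ndL⟩
        have H1 : matchedTo G (L.take n ++ v :: L[n] :: L.drop (n + 1)) u v := by
          rw [insertIdx_eq' L n (by omega) v, hdropn] at Hn
          exact Hn
        have H2 : matchedTo G (L.take n ++ L[n] :: L.drop (n + 1)) u b := by
          rw [← hdropn, List.take_append_drop]
          exact hbackup
        have hbw : b ≠ L[n] := by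
          intro h
          have hd : L.idxOf b < L.length := List.idxOf_lt_length_iff.2 hbmemL
          have hgb : L[L.idxOf b]'hd = b := List.getElem_idxOf hd
          have heq : L.idxOf b = n :=
            (ndL.getElem_inj_iff (hi := hd) (hj := hnL)).1 (by rw [hgb, ← h])
          rw [hidxL] at heq
          omega
        have hbA : b ∉ L.take n := hbtake n (by omega)
        have := swap_main G (L.take n) (L.drop (n + 1)) v L[n] u b ndn H1 H2 hbw hbA
        rw [insertIdx_eq' L (n + 1) (by omega) v, htaken, List.append_assoc]
        exact this
    exact key i hik hiB
  · -- the backup is unchanged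
    have herase : ((L.insertIdx i v).erase v) = L := by
      rw [insertIdx_eq' L i hiL v,
        List.erase_append_right _ (fun h => hvL (List.take_subset _ _ h)),
        List.erase_cons_head, List.take_append_drop]
    rw [herase]
    exact hbackup
  · -- the rank of b is unchanged
    rw [insertIdx_eq' L i hiL v,
      List.idxOf_append_of_notMem (hbtake i (by omega)),
      List.idxOf_cons_ne _ (Ne.symm hbv)]
    have h2 : (L.take i).length = i := by simp [List.length_take]; omega
    rw [h2, hidxdrop i (by omega) hiL]
    simp only [Nat.succ_eq_add_one]
    omega
end

section
/- Equivalence of restricted and unrestricted vertex-arrival Ranking: For any fixed permutation σ : V → {1,…,|V|}, the matching produced by the unrestricted Ranking (each arriving vertex matches its lowest-σ-ranked unmatched neighbor, arrived or not) equals the matching produced by restricted Ranking (each arriving vertex matches its lowest-σ-ranked unmatched neighbor among those that have already arrived). -/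
open List

variable {V : Type*}

/-- Restricted Ranking: vertices arrive in list order; an arriving vertex is matched to
its first unmatched neighbor among the vertices that have already arrived. -/
def rankingRestrictedAux [DecidableEq V] (G : SimpleGraph V) [DecidableRel G.Adj] :
    List V → List V → List (V × V) → List (V × V)
  | _, [], M => M
  | arrived, u :: rest, M =>
    let arrived' := arrived ++ [u]
    let M' :=
      if isMatchedL M u = true then M
      else
        match arrived'.find? (fun w => decide (G.Adj u w) && !isMatchedL M w) with
        | some w => (u, w) :: M
        | none => M
    rankingRestrictedAux G arrived' rest M'

def rankingRestricted [DecidableEq V] (G : SimpleGraph V) [DecidableRel G.Adj]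
    (order : List V) : List (V × V) :=
  rankingRestrictedAux G [] order []

section Helpers

variable {α : Type*} [DecidableEq α]

lemma find?_min {p : α → Bool} :
    ∀ {l : List α} {a : α}, l.find? p = some a → ∀ b ∈ l, p b = true →
      l.idxOf a ≤ l.idxOf b := by
  intro l
  induction l with
  | nil => intro a h; simp at h
  | cons c l ih =>
    intro a h b hb hpb
    by_cases hc : p c = true
    · rw [List.find?_cons_of_pos hc] at h
      cases h
      simp [List.idxOf_cons_self]
    · rw [List.find?_cons_of_neg hc] at h
      have hac : a ≠ c := by rintro rfl; exact hc (List.find?_some h)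
      have hbc : b ≠ c := fun h' => hc (h' ▸ hpb)
      have hbl : b ∈ l := (List.mem_cons.1 hb).resolve_left hbc
      rw [List.idxOf_cons_ne _ (fun h' => hac h'.symm),
        List.idxOf_cons_ne _ (fun h' => hbc h'.symm)]
      exact Nat.succ_le_succ (ih h b hbl hpb)

lemma find?_eq_some_of {p : α → Bool} :
    ∀ {l : List α} {a : α}, l.Nodup → a ∈ l → p a = true →
      (∀ b ∈ l, l.idxOf b < l.idxOf a → p b = false) → l.find? p = some a := by
  intro l
  induction l with
  | nil => intro a _ h; simp at h
  | cons c l ih =>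
    intro a hnd ha hpa hmin
    by_cases hac : a = c
    · subst hac
      exact List.find?_cons_of_pos hpa
    · have hal : a ∈ l := (List.mem_cons.1 ha).resolve_left hac
      have hpc : p c = false := by
        apply hmin c (List.mem_cons_self)
        rw [List.idxOf_cons_self, List.idxOf_cons_ne _ (fun h' => hac h'.symm)]
        exact Nat.succ_pos _
      rw [List.find?_cons_of_neg (by simp [hpc])]
      apply ih (List.nodup_cons.1 hnd).2 hal hpa
      intro b hb hlt
      have hbc : b ≠ c := by rintro rfl; exact (List.nodup_cons.1 hnd).1 hb
      apply hmin b (List.mem_cons_of_mem _ hb)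
      rw [List.idxOf_cons_ne _ (fun h' => hbc h'.symm),
        List.idxOf_cons_ne _ (fun h' => hac h'.symm)]
      exact Nat.succ_lt_succ hlt

lemma mem_take_iff_indexOf :
    ∀ (l : List α) (t : ℕ) (x : α), x ∈ l.take t ↔ x ∈ l ∧ l.idxOf x < t := by
  intro l
  induction l with
  | nil => simp
  | cons c l ih =>
    intro t x
    cases t with
    | zero => simp
    | succ t =>
      by_cases hx : x = c
      · subst hx; simp [List.idxOf_cons_self]
      · simp only [List.take_succ_cons, List.mem_cons, hx, false_or,
          List.idxOf_cons_ne _ (fun h' => hx h'.symm), ih, Nat.succ_lt_succ_iff]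

end Helpers

section MatchedL

variable [DecidableEq V]

lemma matched_iff (M : List (V × V)) (u : V) :
    isMatchedL M u = true ↔ ∃ p ∈ M, p.1 = u ∨ p.2 = u := by
  simp [isMatchedL, List.any_eq_true]

lemma matched_of_mem_s19 {M : List (V × V)} {x y : V} (h : (x, y) ∈ M) :
    isMatchedL M x = true ∧ isMatchedL M y = true :=
  ⟨(matched_iff M x).2 ⟨(x,y), h, Or.inl rfl⟩, (matched_iff M y).2 ⟨(x,y), h, Or.inr rfl⟩⟩

lemma matched_mono {M M' : List (V × V)} (h : M <:+ M') {u : V}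
    (hm : isMatchedL M u = true) : isMatchedL M' u = true := by
  rw [matched_iff] at hm ⊢
  obtain ⟨p, hp, hpu⟩ := hm
  exact ⟨p, h.subset hp, hpu⟩

lemma unmatched_mono {M M' : List (V × V)} (h : M <:+ M') {u : V}
    (hm : isMatchedL M' u = false) : isMatchedL M u = false := by
  by_contra hc
  rw [Bool.not_eq_false] at hc
  simp [matched_mono h hc] at hm

end MatchedL

section Unrestricted

variable [DecidableEq V] (G : SimpleGraph V) [DecidableRel G.Adj] (order : List V)

lemma step_nil (M : List (V × V)) (u : V) :
    rankingStepF G [] order M u =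
      if isMatchedL M u = true then M
      else
        match order.find? (fun w => decide (G.Adj u w) && !isMatchedL M w) with
        | some w => (u, w) :: M
        | none => M := by
  simp only [rankingStepF, List.mem_nil_iff, false_or, decide_false, Bool.not_false,
    Bool.and_true]

lemma mu_zero : rankingPartialF G [] order 0 = [] := rfl

lemma mu_succ {t : ℕ} (ht : t < order.length) :
    rankingPartialF G [] order (t + 1) =
      rankingStepF G [] order (rankingPartialF G [] order t) order[t] := by
  unfold rankingPartialF
  rw [List.take_succ, List.getElem?_eq_getElem ht]
  simp only [Option.toList_some, List.foldl_append, List.foldl_cons, List.foldl_nil]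

lemma mu_succ_ge {t : ℕ} (ht : order.length ≤ t) :
    rankingPartialF G [] order (t + 1) = rankingPartialF G [] order t := by
  unfold rankingPartialF
  rw [List.take_of_length_le ht, List.take_of_length_le (le_trans ht (Nat.le_succ _))]

lemma mu_suffix_succ (t : ℕ) :
    rankingPartialF G [] order t <:+ rankingPartialF G [] order (t + 1) := by
  by_cases ht : t < order.length
  · rw [mu_succ G order ht, step_nil]
    split
    · exact List.suffix_refl _
    · cases h : order.find? (fun w => decide (G.Adj order[t] w)
          && !isMatchedL (rankingPartialF G [] order t) w) with
      | none => exact List.suffix_refl _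
      | some w => exact List.suffix_cons _ _
  · rw [mu_succ_ge G order (le_of_not_gt ht)]

lemma mu_suffix {s t : ℕ} (h : s ≤ t) :
    rankingPartialF G [] order s <:+ rankingPartialF G [] order t := by
  induction t with
  | zero => cases Nat.le_zero.1 h; exact List.suffix_refl _
  | succ t ih =>
    rcases Nat.lt_or_ge s (t + 1) with h' | h'
    · exact (ih (Nat.lt_succ_iff.1 h')).trans (mu_suffix_succ G order t)
    · cases le_antisymm h h'
      exact List.suffix_refl _

lemma mu_spec : ∀ {t : ℕ} {x y : V}, (x, y) ∈ rankingPartialF G [] order t →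
    ∃ s, s < t ∧ ∃ hs : s < order.length, order[s] = x ∧
      isMatchedL (rankingPartialF G [] order s) x = false ∧
      order.find? (fun w => decide (G.Adj x w)
        && !isMatchedL (rankingPartialF G [] order s) w) = some y ∧
      rankingPartialF G [] order (s + 1) = (x, y) :: rankingPartialF G [] order s := by
  intro t
  induction t with
  | zero => intro x y h; rw [mu_zero] at h; simp at h
  | succ t ih =>
    intro x y h
    by_cases ht : t < order.length
    · rw [mu_succ G order ht, step_nil] at h
      by_cases hm : isMatchedL (rankingPartialF G [] order t) order[t] = true
      · rw [if_pos hm] at h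
        obtain ⟨s, hst, rest⟩ := ih h
        exact ⟨s, Nat.lt_succ_of_lt hst, rest⟩
      · rw [if_neg hm] at h
        cases hf : order.find? (fun w => decide (G.Adj order[t] w)
            && !isMatchedL (rankingPartialF G [] order t) w) with
        | none =>
          rw [hf] at h
          obtain ⟨s, hst, rest⟩ := ih h
          exact ⟨s, Nat.lt_succ_of_lt hst, rest⟩
        | some w =>
          rw [hf] at h
          rcases List.mem_cons.1 h with heq | h
          · obtain ⟨rfl, rfl⟩ := Prod.mk.injEq .. ▸ heq
            refine ⟨t, Nat.lt_succ_self _, ht, rfl, by simpa using hm, hf, ?_⟩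
            rw [mu_succ G order ht, step_nil, if_neg hm, hf]
          · obtain ⟨s, hst, rest⟩ := ih h
            exact ⟨s, Nat.lt_succ_of_lt hst, rest⟩
    · rw [mu_succ_ge G order (le_of_not_gt ht)] at h
      obtain ⟨s, hst, rest⟩ := ih h
      exact ⟨s, Nat.lt_succ_of_lt hst, rest⟩

lemma mu_adj {t : ℕ} {x y : V} (h : (x, y) ∈ rankingPartialF G [] order t) :
    G.Adj x y := by
  obtain ⟨s, _, _, _, _, hfind, _⟩ := mu_spec G order h
  have := List.find?_some hfind
  simp only [Bool.and_eq_true, decide_eq_true_eq] at this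
  exact this.1

lemma mu_disjoint {s s' : ℕ} {x y x' y' : V}
    (hss' : s + 1 ≤ s')
    (heq : rankingPartialF G [] order (s + 1) = (x, y) :: rankingPartialF G [] order s)
    (hux' : isMatchedL (rankingPartialF G [] order s') x' = false)
    (hfind' : order.find? (fun w => decide (G.Adj x' w)
      && !isMatchedL (rankingPartialF G [] order s') w) = some y') :
    x ≠ x' ∧ x ≠ y' ∧ y ≠ x' ∧ y ≠ y' := by
  have hmem : (x, y) ∈ rankingPartialF G [] order s' :=
    (mu_suffix G order hss').subset (heq ▸ List.mem_cons_self)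
  have hx := (matched_of_mem_s19 hmem).1
  have hy := (matched_of_mem_s19 hmem).2
  have huy' : isMatchedL (rankingPartialF G [] order s') y' = false := by
    have := List.find?_some hfind'
    simp only [Bool.and_eq_true, Bool.not_eq_true'] at this
    exact this.2
  refine ⟨?_, ?_, ?_, ?_⟩ <;> rintro rfl <;> simp_all

lemma mu_unique {t : ℕ} {x y x' y' : V}
    (h1 : (x, y) ∈ rankingPartialF G [] order t)
    (h2 : (x', y') ∈ rankingPartialF G [] order t)
    (hshare : x = x' ∨ x = y' ∨ y = x' ∨ y = y') : x = x' ∧ y = y' := by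
  obtain ⟨s, hst, hs, hgx, hux, hfind, heq⟩ := mu_spec G order h1
  obtain ⟨s', hst', hs', hgx', hux', hfind', heq'⟩ := mu_spec G order h2
  rcases lt_trichotomy s s' with hlt | heqs | hgt
  · obtain ⟨a, b, c, d⟩ := mu_disjoint G order hlt heq hux' hfind'
    tauto
  · subst heqs
    have := heq.symm.trans heq'
    simp only [List.cons.injEq, Prod.mk.injEq] at this
    exact this.1
  · obtain ⟨a, b, c, d⟩ := mu_disjoint G order hgt heq' hux hfind
    tauto

lemma mu_unmatched_all (hall : ∀ v : V, v ∈ order) {t s : ℕ} (hs : s < order.length)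
    {x : V} (hgx : order[s] = x) (hst : s < t)
    (hun : isMatchedL (rankingPartialF G [] order t) x = false) :
    ∀ v, G.Adj x v → isMatchedL (rankingPartialF G [] order s) v = true := by
  have hun1 : isMatchedL (rankingPartialF G [] order (s + 1)) x = false :=
    unmatched_mono (mu_suffix G order hst) hun
  have huns : isMatchedL (rankingPartialF G [] order s) x = false :=
    unmatched_mono (mu_suffix_succ G order s) hun1
  have hstep := mu_succ G order hs
  rw [step_nil, hgx, if_neg (by simp [huns])] at hstep
  cases hf : order.find? (fun w => decide (G.Adj x w)
      && !isMatchedL (rankingPartialF G [] order s) w) with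
  | some w =>
    rw [hf] at hstep
    rw [hstep] at hun1
    simp [isMatchedL] at hun1
  | none =>
    intro v hadj
    have := List.find?_eq_none.1 hf v (hall v)
    simp only [Bool.and_eq_true, decide_eq_true_eq, Bool.not_eq_true', not_and] at this
    have := this hadj
    simpa using this

end Unrestricted

section Main

variable [DecidableEq V] (G : SimpleGraph V) [DecidableRel G.Adj] (order : List V)

lemma restricted_invariant (hnd : order.Nodup) (hall : ∀ v : V, v ∈ order) :
    ∀ (rest arrived : List V) (Mr : List (V × V)),
      order = arrived ++ rest →
      (∀ x y : V, (x, y) ∈ Mr →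
        ((x, y) ∈ rankingPartialF G [] order arrived.length ∨
          (y, x) ∈ rankingPartialF G [] order arrived.length)) →
      (∀ x y : V, (x, y) ∈ rankingPartialF G [] order arrived.length →
        order.idxOf y < arrived.length → ((x, y) ∈ Mr ∨ (y, x) ∈ Mr)) →
      (∀ x y : V, (x, y) ∈ Mr →
        order.idxOf x < arrived.length ∧ order.idxOf y < arrived.length) →
      matchEdges (rankingPartialF G [] order order.length) =
        matchEdges (rankingRestrictedAux G arrived rest Mr) := by
  intro rest
  induction rest with
  | nil =>
    intro arrived Mr horder hA hB hD
    rw [List.append_nil] at horder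
    subst horder
    show matchEdges (rankingPartialF G [] order order.length) = matchEdges Mr
    ext e
    simp only [matchEdges, Set.mem_setOf_eq]
    constructor
    · rintro ⟨⟨x, y⟩, hp, rfl⟩
      have hy : order.idxOf y < order.length := List.idxOf_lt_length_iff.2 (hall y)
      rcases hB x y hp hy with h | h
      · exact ⟨(x, y), h, rfl⟩
      · exact ⟨(y, x), h, Sym2.eq_swap⟩
    · rintro ⟨⟨x, y⟩, hp, rfl⟩
      rcases hA x y hp with h | h
      · exact ⟨(x, y), h, rfl⟩
      · exact ⟨(y, x), h, Sym2.eq_swap⟩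
  | cons v rest' ih =>
    intro arrived Mr horder hA hB hD
    have ht : arrived.length < order.length := by rw [horder]; simp
    have hvt : order[arrived.length]'ht = v := by
      have h2 : arrived.length < (arrived ++ v :: rest').length := by simp
      have h3 : order[arrived.length]'ht = (arrived ++ v :: rest')[arrived.length]'h2 := by
        congr 1
      rw [h3, List.getElem_append_right (Nat.le_refl _)]
      simp
    have hidxv : order.idxOf v = arrived.length := by
      have := hnd.idxOf_getElem arrived.length ht
      rwa [hvt] at this
    have htake : order.take arrived.length = arrived := by
      rw [horder]; exact List.take_left
    have hmemarr : ∀ x : V, x ∈ arrived ↔ x ∈ order ∧ order.idxOf x < arrived.length := by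
      intro x
      conv_lhs => rw [← htake]
      exact mem_take_iff_indexOf order arrived.length x
    have horder2 : order = (arrived ++ [v]) ++ rest' := by rw [horder]; simp
    have hndA' : (arrived ++ [v]).Nodup := by
      rw [horder2] at hnd
      exact List.Nodup.sublist (List.sublist_append_left _ _) hnd
    have hidxA' : ∀ x ∈ arrived ++ [v], (arrived ++ [v]).idxOf x = order.idxOf x := by
      intro x hx
      rw [horder2]
      exact (List.idxOf_append_of_mem hx).symm
    have hidx_eq_v : ∀ y : V, order.idxOf y = arrived.length → y = v := by
      intro y hy
      exact (List.idxOf_inj (hall y)).1 (by rw [hy, hidxv])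
    have hfirst_ne_v : ∀ b : V, (v, b) ∉ rankingPartialF G [] order arrived.length := by
      intro b hp
      obtain ⟨s, hst, hs, hgx, -, -, -⟩ := mu_spec G order hp
      have := hnd.idxOf_getElem s hs
      rw [hgx, hidxv] at this
      omega
    have hMrMu : ∀ x : V, isMatchedL Mr x = true →
        isMatchedL (rankingPartialF G [] order arrived.length) x = true := by
      intro x hx
      rw [matched_iff] at hx ⊢
      obtain ⟨⟨a, b⟩, hp, hab⟩ := hx
      rcases hA a b hp with h | h
      · exact ⟨(a, b), h, hab⟩
      · refine ⟨(b, a), h, ?_⟩; tauto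
    -- the key exclusion claim
    have claim : ∀ x : V, x ∈ arrived → G.Adj v x → isMatchedL Mr x = false →
        isMatchedL (rankingPartialF G [] order (order.idxOf x)) v = false →
        (x, v) ∉ rankingPartialF G [] order arrived.length → False := by
      intro x hxarr hadj hMrx hvun hxv
      have hxord : x ∈ order := hall x
      have hxidx : order.idxOf x < arrived.length := ((hmemarr x).1 hxarr).2
      by_cases hmx : isMatchedL (rankingPartialF G [] order arrived.length) x = true
      · rw [matched_iff] at hmx
        obtain ⟨⟨a, b⟩, hp, hab⟩ := hmx
        rcases hab with ha | hb
        · -- p = (x, b)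
          simp only at ha; subst ha
          by_cases hbidx : order.idxOf b < arrived.length
          · rcases hB a b hp hbidx with h | h
            · rw [(matched_of_mem_s19 h).1] at hMrx; exact Bool.noConfusion hMrx
            · rw [(matched_of_mem_s19 h).2] at hMrx; exact Bool.noConfusion hMrx
          · have hbv : b ≠ v := fun h => hxv (h ▸ hp)
            have hbt : arrived.length < order.idxOf b := by
              rcases Nat.lt_or_ge arrived.length (order.idxOf b) with h | h
              · exact h
              · exact absurd (le_antisymm h (Nat.le_of_not_gt hbidx))
                  (fun hh => hbv (hidx_eq_v b hh))
            obtain ⟨s, hst, hs, hgx, hux, hfind, heqq⟩ := mu_spec G order hp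
            have hsx : s = order.idxOf a := by
              have := hnd.idxOf_getElem s hs
              rw [hgx] at this; omega
            have hvun' : isMatchedL (rankingPartialF G [] order s) v = false := by
              rw [hsx]; exact hvun
            have hmin := find?_min hfind v (hall v)
              (by simp [hadj.symm, hvun'])
            rw [hidxv] at hmin
            omega
        · -- p = (a, x)
          simp only at hb; subst hb
          rcases hB a b hp hxidx with h | h
          · rw [(matched_of_mem_s19 h).2] at hMrx; exact Bool.noConfusion hMrx
          · rw [(matched_of_mem_s19 h).1] at hMrx; exact Bool.noConfusion hMrx
      · have hmx' : isMatchedL (rankingPartialF G [] order arrived.length) x = false := by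
          simpa using hmx
        have := mu_unmatched_all G order hall (List.idxOf_lt_length_iff.2 hxord)
          (List.getElem_idxOf (List.idxOf_lt_length_iff.2 hxord)) hxidx hmx' v hadj.symm
        rw [this] at hvun
        exact Bool.noConfusion hvun
    have hRA : rankingRestrictedAux G arrived (v :: rest') Mr =
        rankingRestrictedAux G (arrived ++ [v]) rest'
          (if isMatchedL Mr v = true then Mr
           else
             match (arrived ++ [v]).find? (fun w => decide (G.Adj v w) && !isMatchedL Mr w) with
             | some w => (v, w) :: Mr
             | none => Mr) := rfl
    have hlenA' : (arrived ++ [v]).length = arrived.length + 1 := by simp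
    by_cases hmv : isMatchedL (rankingPartialF G [] order arrived.length) v = true
    · -- Case A : v is already (pending-)matched in the unrestricted matching
      have hmv0 := hmv
      rw [matched_iff] at hmv0
      obtain ⟨⟨a, b⟩, hp, hab⟩ := hmv0
      rcases hab with ha | hb
      · simp only at ha; rw [ha] at hp; exact absurd hp (hfirst_ne_v b)
      · simp only at hb; rw [hb] at hp
        -- hp : (a, v) ∈ Mu t  ; call u := a
        obtain ⟨su, hsu_lt, hsu, hgu, -, -, -⟩ := mu_spec G order hp
        have hidxu : order.idxOf a < arrived.length := by
          have := hnd.idxOf_getElem su hsu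
          rw [hgu] at this; omega
        have huarr : a ∈ arrived := (hmemarr a).2 ⟨hall a, hidxu⟩
        have hadjuv : G.Adj a v := mu_adj G order hp
        have hMrv : isMatchedL Mr v = false := by
          by_contra hc
          rw [Bool.not_eq_false, matched_iff] at hc
          obtain ⟨⟨c, d⟩, hpc, hcd⟩ := hc
          have := hD c d hpc
          rcases hcd with h | h <;> simp only at h <;> subst h <;> omega
        have hMru : isMatchedL Mr a = false := by
          by_contra hc
          rw [Bool.not_eq_false, matched_iff] at hc
          obtain ⟨⟨c, d⟩, hpc, hcd⟩ := hc
          simp only at hcd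
          rcases hA c d hpc with h | h
          · obtain ⟨rfl, rfl⟩ := mu_unique G order h hp (by tauto)
            have := (hD _ _ hpc).2; omega
          · obtain ⟨rfl, rfl⟩ := mu_unique G order h hp (by tauto)
            have := (hD _ _ hpc).1; omega
        have hv_unm_early : ∀ b' : V, b' ∈ arrived → order.idxOf b' < order.idxOf a →
            isMatchedL (rankingPartialF G [] order (order.idxOf b')) v = false := by
          intro b' _ hblt
          by_contra hc
          rw [Bool.not_eq_false, matched_iff] at hc
          obtain ⟨⟨c, d⟩, hpc, hcd⟩ := hc
          have hb't : order.idxOf b' ≤ arrived.length := Nat.le_of_lt (by omega)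
          have hpc' : (c, d) ∈ rankingPartialF G [] order arrived.length :=
            (mu_suffix G order hb't).subset hpc
          simp only at hcd
          have hcd' : c = a ∧ d = v := by
            rcases hcd with h | h
            · subst h; exact absurd hpc' (hfirst_ne_v d)
            · subst h; exact mu_unique G order hpc' hp (by tauto)
          obtain ⟨rfl, rfl⟩ := hcd'
          obtain ⟨s, hst, hs, hgx, -, -, -⟩ := mu_spec G order hpc
          have := hnd.idxOf_getElem s hs
          rw [hgx] at this
          omega
        have hfr : (arrived ++ [v]).find?
            (fun w => decide (G.Adj v w) && !isMatchedL Mr w) = some a := by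
          apply find?_eq_some_of hndA' (List.mem_append_left _ huarr)
            (by simp [hadjuv.symm, hMru])
          intro b' hb' hblt
          by_contra hc
          rw [Bool.not_eq_false, Bool.and_eq_true, decide_eq_true_eq, Bool.not_eq_true'] at hc
          obtain ⟨hbadj, hbMr⟩ := hc
          have hbv : b' ≠ v := (G.ne_of_adj hbadj).symm
          have hbarr : b' ∈ arrived := by
            rcases List.mem_append.1 hb' with h | h
            · exact h
            · simp at h; exact absurd h hbv
          rw [hidxA' b' hb', hidxA' a (List.mem_append_left _ huarr)] at hblt
          apply claim b' hbarr hbadj hbMr (hv_unm_early b' hbarr hblt)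
          intro hbvmem
          obtain ⟨rfl, -⟩ := mu_unique G order hbvmem hp (by tauto)
          omega
        have hMuStep : rankingPartialF G [] order (arrived.length + 1) =
            rankingPartialF G [] order arrived.length := by
          rw [mu_succ G order ht, step_nil, hvt, if_pos hmv]
        have hMr' : (if isMatchedL Mr v = true then Mr
            else
              match (arrived ++ [v]).find? (fun w => decide (G.Adj v w) && !isMatchedL Mr w) with
              | some w => (v, w) :: Mr
              | none => Mr) = (v, a) :: Mr := by
          rw [if_neg (by simp [hMrv]), hfr]
        rw [hRA, hMr']
        apply ih (arrived ++ [v]) ((v, a) :: Mr) horder2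
        · intro x y h
          rw [hlenA', hMuStep]
          rcases List.mem_cons.1 h with heq | h
          · obtain ⟨rfl, rfl⟩ := Prod.mk.injEq .. ▸ heq
            exact Or.inr hp
          · exact hA x y h
        · intro x y hxy hyidx
          rw [hlenA'] at hyidx
          rw [hlenA', hMuStep] at hxy
          rcases Nat.lt_succ_iff_lt_or_eq.1 hyidx with h | h
          · rcases hB x y hxy h with hh | hh
            · exact Or.inl (List.mem_cons_of_mem _ hh)
            · exact Or.inr (List.mem_cons_of_mem _ hh)
          · have hyv := hidx_eq_v y h
            rw [hyv] at hxy ⊢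
            obtain ⟨rfl, -⟩ := mu_unique G order hxy hp (by tauto)
            exact Or.inr (List.mem_cons_self)
        · intro x y h
          rw [hlenA']
          rcases List.mem_cons.1 h with heq | h
          · obtain ⟨rfl, rfl⟩ := Prod.mk.injEq .. ▸ heq
            omega
          · have := hD x y h; omega
    · -- Case B : v is unmatched in the unrestricted matching
      have hmv' : isMatchedL (rankingPartialF G [] order arrived.length) v = false := by
        simpa using hmv
      have hMrv : isMatchedL Mr v = false := by
        by_contra hc
        rw [Bool.not_eq_false] at hc
        rw [hMrMu v hc] at hmv'
        exact Bool.noConfusion hmv'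
      have hcand : ∀ b ∈ arrived ++ [v],
          (decide (G.Adj v b) && !isMatchedL Mr b) = true →
          G.Adj v b ∧ b ∈ arrived ∧ b ∈ order ∧ order.idxOf b < arrived.length ∧
            isMatchedL (rankingPartialF G [] order arrived.length) b = false := by
        intro b hb hpb
        rw [Bool.and_eq_true, decide_eq_true_eq, Bool.not_eq_true'] at hpb
        obtain ⟨hbadj, hbMr⟩ := hpb
        have hbv : b ≠ v := (G.ne_of_adj hbadj).symm
        have hbarr : b ∈ arrived := by
          rcases List.mem_append.1 hb with h | h
          · exact h
          · simp at h; exact absurd h hbv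
        have hbidx : order.idxOf b < arrived.length := ((hmemarr b).1 hbarr).2
        refine ⟨hbadj, hbarr, hall b, hbidx, ?_⟩
        by_contra hc
        rw [Bool.not_eq_false] at hc
        apply claim b hbarr hbadj hbMr
        · exact unmatched_mono (mu_suffix G order (Nat.le_of_lt hbidx)) hmv'
        · intro hbvmem
          rw [(matched_of_mem_s19 hbvmem).2] at hmv'
          exact Bool.noConfusion hmv'
      have hMuStep0 : rankingPartialF G [] order (arrived.length + 1) =
          match order.find? (fun w => decide (G.Adj v w)
              && !isMatchedL (rankingPartialF G [] order arrived.length) w) with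
          | some w => (v, w) :: rankingPartialF G [] order arrived.length
          | none => rankingPartialF G [] order arrived.length := by
        rw [mu_succ G order ht, step_nil, hvt, if_neg (by simp [hmv'])]
      cases hfU : order.find? (fun w => decide (G.Adj v w)
          && !isMatchedL (rankingPartialF G [] order arrived.length) w) with
      | none =>
        have hMuStep : rankingPartialF G [] order (arrived.length + 1) =
            rankingPartialF G [] order arrived.length := by rw [hMuStep0, hfU]
        have hfr : (arrived ++ [v]).find?
            (fun w => decide (G.Adj v w) && !isMatchedL Mr w) = none := by
          rw [List.find?_eq_none]
          intro b hb hpb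
          obtain ⟨hbadj, -, hbord, -, hbun⟩ := hcand b hb hpb
          exact absurd (by simp [hbadj, hbun] : (decide (G.Adj v b)
            && !isMatchedL (rankingPartialF G [] order arrived.length) b) = true)
            (by simpa using List.find?_eq_none.1 hfU b hbord)
        have hMr' : (if isMatchedL Mr v = true then Mr
            else
              match (arrived ++ [v]).find? (fun w => decide (G.Adj v w) && !isMatchedL Mr w) with
              | some w => (v, w) :: Mr
              | none => Mr) = Mr := by
          rw [if_neg (by simp [hMrv]), hfr]
        rw [hRA, hMr']
        apply ih (arrived ++ [v]) Mr horder2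
        · intro x y h
          rw [hlenA', hMuStep]
          exact hA x y h
        · intro x y hxy hyidx
          rw [hlenA'] at hyidx
          rw [hlenA', hMuStep] at hxy
          rcases Nat.lt_succ_iff_lt_or_eq.1 hyidx with h | h
          · exact hB x y hxy h
          · have hyv := hidx_eq_v y h
            rw [hyv] at hxy
            rw [(matched_of_mem_s19 hxy).2] at hmv'
            exact Bool.noConfusion hmv'
        · intro x y h
          rw [hlenA']
          have := hD x y h; omega
      | some w =>
        have hMuStep : rankingPartialF G [] order (arrived.length + 1) =
            (v, w) :: rankingPartialF G [] order arrived.length := by rw [hMuStep0, hfU]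
        have hpw := List.find?_some hfU
        rw [Bool.and_eq_true, decide_eq_true_eq, Bool.not_eq_true'] at hpw
        obtain ⟨hwadj, hwun⟩ := hpw
        have hword : w ∈ order := List.mem_of_find?_eq_some hfU
        have hwv : w ≠ v := (G.ne_of_adj hwadj).symm
        by_cases hw : order.idxOf w < arrived.length
        · -- the partner has already arrived
          have hwarr : w ∈ arrived := (hmemarr w).2 ⟨hword, hw⟩
          have hMrw : isMatchedL Mr w = false := by
            by_contra hc
            rw [Bool.not_eq_false] at hc
            rw [hMrMu w hc] at hwun
            exact Bool.noConfusion hwun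
          have hfr : (arrived ++ [v]).find?
              (fun w' => decide (G.Adj v w') && !isMatchedL Mr w') = some w := by
            apply find?_eq_some_of hndA' (List.mem_append_left _ hwarr)
              (by simp [hwadj, hMrw])
            intro b hb hblt
            by_contra hc
            rw [Bool.not_eq_false] at hc
            obtain ⟨-, -, hbord, -, hbun⟩ := hcand b hb hc
            rw [Bool.and_eq_true, decide_eq_true_eq, Bool.not_eq_true'] at hc
            have hmin := find?_min hfU b hbord (by simp [hc.1, hbun])
            rw [hidxA' b hb, hidxA' w (List.mem_append_left _ hwarr)] at hblt
            omega
          have hMr' : (if isMatchedL Mr v = true then Mr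
              else
                match (arrived ++ [v]).find? (fun w' => decide (G.Adj v w') && !isMatchedL Mr w') with
                | some w' => (v, w') :: Mr
                | none => Mr) = (v, w) :: Mr := by
            rw [if_neg (by simp [hMrv]), hfr]
          rw [hRA, hMr']
          apply ih (arrived ++ [v]) ((v, w) :: Mr) horder2
          · intro x y h
            rw [hlenA', hMuStep]
            rcases List.mem_cons.1 h with heq | h
            · obtain ⟨rfl, rfl⟩ := Prod.mk.injEq .. ▸ heq
              exact Or.inl (List.mem_cons_self)
            · rcases hA x y h with hh | hh
              · exact Or.inl (List.mem_cons_of_mem _ hh)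
              · exact Or.inr (List.mem_cons_of_mem _ hh)
          · intro x y hxy hyidx
            rw [hlenA'] at hyidx
            rw [hlenA', hMuStep] at hxy
            rcases List.mem_cons.1 hxy with heq | hxy
            · obtain ⟨rfl, rfl⟩ := Prod.mk.injEq .. ▸ heq
              exact Or.inl (List.mem_cons_self)
            · rcases Nat.lt_succ_iff_lt_or_eq.1 hyidx with h | h
              · rcases hB x y hxy h with hh | hh
                · exact Or.inl (List.mem_cons_of_mem _ hh)
                · exact Or.inr (List.mem_cons_of_mem _ hh)
              · have hyv := hidx_eq_v y h
                rw [hyv] at hxy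
                rw [(matched_of_mem_s19 hxy).2] at hmv'
                exact Bool.noConfusion hmv'
          · intro x y h
            rw [hlenA']
            rcases List.mem_cons.1 h with heq | h
            · obtain ⟨rfl, rfl⟩ := Prod.mk.injEq .. ▸ heq
              omega
            · have := hD x y h; omega
        · -- the partner has not yet arrived : pending edge
          have hwt : arrived.length < order.idxOf w := by
            rcases Nat.lt_or_ge arrived.length (order.idxOf w) with h | h
            · exact h
            · exact absurd (le_antisymm h (Nat.le_of_not_gt hw))
                (fun hh => hwv (hidx_eq_v w hh))
          have hfr : (arrived ++ [v]).find?
              (fun w' => decide (G.Adj v w') && !isMatchedL Mr w') = none := by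
            rw [List.find?_eq_none]
            intro b hb hpb
            obtain ⟨hbadj, -, hbord, hbidx, hbun⟩ := hcand b hb hpb
            have hmin := find?_min hfU b hbord (by simp [hbadj, hbun])
            omega
          have hMr' : (if isMatchedL Mr v = true then Mr
              else
                match (arrived ++ [v]).find? (fun w' => decide (G.Adj v w') && !isMatchedL Mr w') with
                | some w' => (v, w') :: Mr
                | none => Mr) = Mr := by
            rw [if_neg (by simp [hMrv]), hfr]
          rw [hRA, hMr']
          apply ih (arrived ++ [v]) Mr horder2
          · intro x y h
            rw [hlenA', hMuStep]
            rcases hA x y h with hh | hh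
            · exact Or.inl (List.mem_cons_of_mem _ hh)
            · exact Or.inr (List.mem_cons_of_mem _ hh)
          · intro x y hxy hyidx
            rw [hlenA'] at hyidx
            rw [hlenA', hMuStep] at hxy
            rcases List.mem_cons.1 hxy with heq | hxy
            · obtain ⟨rfl, rfl⟩ := Prod.mk.injEq .. ▸ heq
              omega
            · rcases Nat.lt_succ_iff_lt_or_eq.1 hyidx with h | h
              · exact hB x y hxy h
              · have hyv := hidx_eq_v y h
                rw [hyv] at hxy
                rw [(matched_of_mem_s19 hxy).2] at hmv'
                exact Bool.noConfusion hmv'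
          · intro x y h
            rw [hlenA']
            have := hD x y h; omega

end Main


/-- Equivalence of restricted and unrestricted vertex-arrival Ranking: for every fixed
permutation of the vertices, the two algorithms output the same matching. -/
theorem stmt19 {V : Type*} [DecidableEq V] (G : SimpleGraph V) [DecidableRel G.Adj]
    (order : List V) (hnd : order.Nodup) (hall : ∀ v : V, v ∈ order) :
    matchEdges (rankingList G order) = matchEdges (rankingRestricted G order) := by
  have h1 : rankingPartialF G [] order order.length = rankingList G order := by
    unfold rankingPartialF rankingList
    rw [List.take_length]
  have h2 : rankingRestricted G order = rankingRestrictedAux G [] order [] := rfl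
  have hmain := restricted_invariant G order hnd hall order [] []
    (by simp)
    (by intro x y h; simp at h)
    (by intro x y _ h; exact absurd h (Nat.not_lt_zero _))
    (by intro x y h; simp at h)
  rw [← h1, h2]
  exact hmain
end
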